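/- arXiv:2407.15183 — 10 statements merged into one kernel-verified Lean document; each statement's English description precedes it below -/
import Mathlib

section
/- Let a, b, c, e be positive integers with e ≤ c. If there exists an integer Heffter array set IHS(a, b·e; c), then there exists an integer Heffter array H(a·c, b·c; b·e, a·e). -/
open Finset

/-- An integer Heffter array set `IHS(m, n; c)`. -/
def IsIHS (m n c : ℕ) (A : Fin c → Matrix (Fin m) (Fin n) ℤ) : Prop :=
  Function.Injective (fun p : Fin c × Fin m × Fin n => |A p.1 p.2.1 p.2.2|) ∧
  (∀ x : ℤ, (1 ≤ x ∧ x ≤ (m : ℤ) * n * c) ↔ ∃ l i j, |A l i j| = x) ∧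
  (∀ l i, ∑ j, A l i j = 0) ∧
  (∀ l j, ∑ i, A l i j = 0)

/-- An integer Heffter array `H(m, n; s, k)` (empty cells encoded by `0`). -/
def IsIntegerHeffterArray (m n s k : ℕ) (A : Matrix (Fin m) (Fin n) ℤ) : Prop :=
  (∀ i, (Finset.univ.filter (fun j => A i j ≠ 0)).card = s) ∧
  (∀ j, (Finset.univ.filter (fun i => A i j ≠ 0)).card = k) ∧
  (∀ i j, A i j ≠ 0 → 1 ≤ |A i j| ∧ |A i j| ≤ (n : ℤ) * (k : ℤ)) ∧
  (∀ i j i' j', A i j ≠ 0 → A i' j' ≠ 0 → |A i j| = |A i' j'| → (i, j) = (i', j')) ∧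
  (∀ i, ∑ j, A i j = 0) ∧
  (∀ j, ∑ i, A i j = 0)

lemma card_filter_comp_equiv {α β : Type*} [Fintype α] [Fintype β] [DecidableEq β] (F : α ≃ β)
    (p : β → Prop) [DecidablePred p] :
    (univ.filter fun x => p (F x)).card = ((univ : Finset β).filter p).card := by
  rw [← Finset.card_image_of_injective (univ.filter fun x => p (F x)) F.injective]
  congr 1
  ext x
  simp [Finset.mem_image, ← F.eq_symm_apply]

lemma card_filter_lt (n m : ℕ) (h : m ≤ n) :
    ((univ : Finset (Fin n)).filter fun x : Fin n => (x : ℕ) < m).card = m := by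
  have : ((univ : Finset (Fin n)).filter fun x : Fin n => (x : ℕ) < m) =
      (Finset.range m).attachFin (fun x hx => lt_of_lt_of_le (Finset.mem_range.1 hx) h) := by
    ext x
    simp [Finset.mem_attachFin]
  rw [this, Finset.card_attachFin, Finset.card_range]

lemma fmod_eq (c q t : ℕ) (hq : q < c) (ht : t < c) :
    (q + c - t) % c = if t ≤ q then q - t else q + c - t := by
  split_ifs with h
  · have : q + c - t = (q - t) + c := by omega
    rw [this, Nat.add_mod_right, Nat.mod_eq_of_lt (by omega)]
  · exact Nat.mod_eq_of_lt (by omega)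

lemma fmod_invol (c q t : ℕ) (hq : q < c) (ht : t < c) :
    (q + c - ((q + c - t) % c)) % c = t := by
  rw [fmod_eq c q t hq ht]
  split_ifs with h
  · rw [fmod_eq c q (q - t) hq (by omega), if_pos (by omega : q - t ≤ q)]
    omega
  · rw [fmod_eq c q (q + c - t) hq (by omega), if_neg (by omega)]
    omega

lemma mul_add_lt_iff (b e K r : ℕ) (hr : r < b) : b * K + r < b * e ↔ K < e := by
  constructor
  · intro hlt
    by_contra hKe
    push_neg at hKe
    have : b * e ≤ b * K := Nat.mul_le_mul_left b hKe
    omega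
  · intro hKe
    have h1 : b * (K + 1) ≤ b * e := Nat.mul_le_mul_left b hKe
    rw [Nat.mul_add, Nat.mul_one] at h1
    omega

theorem heffter_of_IHS
    (a b c e : ℕ) (ha : 0 < a) (hb : 0 < b) (hc : 0 < c) (he : 0 < e)
    (hec : e ≤ c)
    (h : ∃ A : Fin c → Matrix (Fin a) (Fin (b * e)) ℤ, IsIHS a (b * e) c A) :
    ∃ B : Matrix (Fin (a * c)) (Fin (b * c)) ℤ,
      IsIntegerHeffterArray (a * c) (b * c) (b * e) (a * e) B := by
  obtain ⟨A, hinj, hrange, hrowA, hcolA⟩ := h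
  have hbc : 0 < b * c := Nat.mul_pos hb hc
  have hbe : b * e ≤ b * c := Nat.mul_le_mul_left b hec
  have hae : a * e ≤ a * c := Nat.mul_le_mul_left a hec
  have hA1 : ∀ l x y, 1 ≤ |A l x y| := fun l x y => ((hrange _).2 ⟨l, x, y, rfl⟩).1
  have hA2 : ∀ l x y, |A l x y| ≤ (a : ℤ) * ((b * e : ℕ) : ℤ) * c :=
    fun l x y => ((hrange _).2 ⟨l, x, y, rfl⟩).2
  have hA0 : ∀ l x y, A l x y ≠ 0 := by
    intro l x y hz
    have := hA1 l x y
    rw [hz] at this; simp at this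
  -- index maps
  set lI : Fin (a * c) → Fin c := fun i =>
    ⟨(i : ℕ) / a, by
      have h2 : (i : ℕ) < c * a := by rw [Nat.mul_comm c a]; exact i.2
      exact (Nat.div_lt_iff_lt_mul ha).2 h2⟩ with hlI
  set xI : Fin (a * c) → Fin a := fun i => ⟨(i : ℕ) % a, Nat.mod_lt _ ha⟩ with hxI
  set A' : Fin c → Fin a → ℕ → ℤ := fun l x t =>
    if ht : t < b * e then A l x ⟨t, ht⟩ else 0 with hA'
  set yv : Fin c → Fin (b * c) → ℕ := fun l j => ((j : ℕ) + (c - (l : ℕ)) * b) % (b * c)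
    with hyv
  have subadd : ∀ l : Fin c, (c - (l : ℕ)) * b + (l : ℕ) * b = b * c := by
    intro l
    rw [← Nat.add_mul, Nat.sub_add_cancel (le_of_lt l.2), Nat.mul_comm]
  set σ : Fin c → (Fin (b * c) ≃ Fin (b * c)) := fun l =>
    { toFun := fun j => ⟨yv l j, Nat.mod_lt _ hbc⟩
      invFun := fun j => ⟨((j : ℕ) + (l : ℕ) * b) % (b * c), Nat.mod_lt _ hbc⟩
      left_inv := by
        intro j
        apply Fin.ext
        simp only [hyv, Nat.mod_add_mod]
        rw [Nat.add_assoc, subadd l, Nat.add_mod_right, Nat.mod_eq_of_lt j.2]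
      right_inv := by
        intro j
        apply Fin.ext
        simp only [hyv, Nat.mod_add_mod]
        rw [Nat.add_assoc]
        have h5 : (l : ℕ) * b + (c - (l : ℕ)) * b = b * c := by
          rw [Nat.add_comm]; exact subadd l
        rw [h5, Nat.add_mod_right, Nat.mod_eq_of_lt j.2] } with hσ
  set ρ : Fin (a * c) ≃ Fin c × Fin a :=
    { toFun := fun i => (lI i, xI i)
      invFun := fun p => ⟨a * (p.1 : ℕ) + (p.2 : ℕ), by
        have h1 := p.1.2; have h2 := p.2.2
        calc a * (p.1 : ℕ) + (p.2 : ℕ) < a * ((p.1 : ℕ) + 1) := by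
              rw [Nat.mul_add, Nat.mul_one]; omega
          _ ≤ a * c := Nat.mul_le_mul_left a h1⟩
      left_inv := by
        intro i
        apply Fin.ext
        simp only [hlI, hxI]
        exact Nat.div_add_mod _ _
      right_inv := by
        rintro ⟨l, x⟩
        simp only [hlI, hxI, Prod.mk.injEq]
        constructor
        · apply Fin.ext
          show (a * (l : ℕ) + (x : ℕ)) / a = (l : ℕ)
          rw [Nat.mul_add_div ha, Nat.div_eq_of_lt x.2, Nat.add_zero]
        · apply Fin.ext
          show (a * (l : ℕ) + (x : ℕ)) % a = (x : ℕ)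
          rw [Nat.mul_add_mod, Nat.mod_eq_of_lt x.2] } with hρ
  have hqlt : ∀ j : Fin (b * c), (j : ℕ) / b < c := by
    intro j
    have h2 : (j : ℕ) < c * b := by rw [Nat.mul_comm c b]; exact j.2
    exact (Nat.div_lt_iff_lt_mul hb).2 h2
  -- key decomposition of yv
  have yv_eq : ∀ (l : Fin c) (j : Fin (b * c)),
      yv l j = b * (((j : ℕ) / b + c - (l : ℕ)) % c) + (j : ℕ) % b := by
    intro l j
    have hrb : (j : ℕ) % b < b := Nat.mod_lt _ hb
    have hj : (j : ℕ) = b * ((j : ℕ) / b) + (j : ℕ) % b := (Nat.div_add_mod _ _).symm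
    set M : ℕ := (j : ℕ) / b + (c - (l : ℕ)) with hM
    have h1 : (j : ℕ) + (c - (l : ℕ)) * b = b * M + (j : ℕ) % b := by
      rw [hM, Nat.mul_add, Nat.mul_comm b (c - (l : ℕ))]
      conv_lhs => rw [hj]
      ring
    have h2 : b * M + (j : ℕ) % b = (b * c) * (M / c) + (b * (M % c) + (j : ℕ) % b) := by
      have hMd : M = c * (M / c) + M % c := (Nat.div_add_mod _ _).symm
      calc b * M + (j : ℕ) % b = b * (c * (M / c) + M % c) + (j : ℕ) % b := by rw [← hMd]
        _ = (b * c) * (M / c) + (b * (M % c) + (j : ℕ) % b) := by ring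
    have h3 : b * (M % c) + (j : ℕ) % b < b * c := by
      have hm : M % c < c := Nat.mod_lt _ hc
      have h5 : b * (M % c + 1) ≤ b * c := Nat.mul_le_mul_left b hm
      rw [Nat.mul_add, Nat.mul_one] at h5
      exact lt_of_lt_of_le (Nat.add_lt_add_left hrb _) h5
    have h4 : (j : ℕ) / b + (c - (l : ℕ)) = (j : ℕ) / b + c - (l : ℕ) :=
      (Nat.add_sub_assoc (le_of_lt l.2) _).symm
    show ((j : ℕ) + (c - (l : ℕ)) * b) % (b * c) = _
    rw [h1, h2, Nat.mul_add_mod, Nat.mod_eq_of_lt h3, hM, h4]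
  have yv_lt_iff : ∀ (l : Fin c) (j : Fin (b * c)),
      yv l j < b * e ↔ ((j : ℕ) / b + c - (l : ℕ)) % c < e := by
    intro l j
    rw [yv_eq l j]
    exact mul_add_lt_iff b e _ _ (Nat.mod_lt _ hb)
  have hA'pos : ∀ l x t (ht : t < b * e), A' l x t = A l x ⟨t, ht⟩ := by
    intro l x t ht
    simp only [hA']
    rw [dif_pos ht]
  have hA'neg : ∀ l x t, ¬ t < b * e → A' l x t = 0 := by
    intro l x t ht
    simp only [hA']
    rw [dif_neg ht]
  -- the array
  set B : Matrix (Fin (a * c)) (Fin (b * c)) ℤ := fun i j => A' (lI i) (xI i) (yv (lI i) j)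
    with hB
  have hBval : ∀ i j (hy : yv (lI i) j < b * e), B i j = A (lI i) (xI i) ⟨yv (lI i) j, hy⟩ := by
    intro i j hy
    simp only [hB]
    exact hA'pos _ _ _ hy
  have hBne : ∀ i j, B i j ≠ 0 ↔ yv (lI i) j < b * e := by
    intro i j
    constructor
    · intro hne
      by_contra hy
      rw [hB] at hne
      exact hne (hA'neg _ _ _ hy)
    · intro hy
      rw [hBval i j hy]
      exact hA0 _ _ _
  refine ⟨B, ?_, ?_, ?_, ?_, ?_, ?_⟩
  · -- row counts
    intro i
    have : (univ.filter fun j => B i j ≠ 0) =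
        (univ.filter fun j => ((σ (lI i) j : Fin (b * c)) : ℕ) < b * e) := by
      ext j
      simp only [Finset.mem_filter, Finset.mem_univ, true_and]
      rw [hBne i j]
      rfl
    rw [this, card_filter_comp_equiv (σ (lI i)) (fun y : Fin (b * c) => (y : ℕ) < b * e),
      card_filter_lt _ _ hbe]
  · -- column counts
    intro j
    have hqc : (j : ℕ) / b < c := hqlt j
    set τ : Fin c ≃ Fin c :=
      { toFun := fun l => ⟨((j : ℕ) / b + c - (l : ℕ)) % c, Nat.mod_lt _ hc⟩
        invFun := fun l => ⟨((j : ℕ) / b + c - (l : ℕ)) % c, Nat.mod_lt _ hc⟩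
        left_inv := fun l => Fin.ext (fmod_invol c _ _ hqc l.2)
        right_inv := fun l => Fin.ext (fmod_invol c _ _ hqc l.2) } with hτ
    have hfeq : (univ.filter fun i => B i j ≠ 0) =
        (univ.filter fun i => ((τ ((ρ i).1) : Fin c) : ℕ) < e) := by
      ext i
      simp only [Finset.mem_filter, Finset.mem_univ, true_and]
      rw [hBne i j, yv_lt_iff]
      rfl
    rw [hfeq, card_filter_comp_equiv ρ (fun p : Fin c × Fin a => ((τ p.1 : Fin c) : ℕ) < e)]
    have hprod : (univ.filter fun p : Fin c × Fin a => ((τ p.1 : Fin c) : ℕ) < e) =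
        (univ.filter fun l : Fin c => ((τ l : Fin c) : ℕ) < e) ×ˢ univ := by
      ext p
      simp [Finset.mem_filter, Finset.mem_product]
    rw [hprod, Finset.card_product, card_filter_comp_equiv τ (fun l : Fin c => (l : ℕ) < e),
      card_filter_lt _ _ hec, Finset.card_univ, Fintype.card_fin, Nat.mul_comm]
  · -- bounds
    intro i j hne
    have hy := (hBne i j).1 hne
    rw [hBval i j hy]
    refine ⟨hA1 _ _ _, le_trans (hA2 _ _ _) (le_of_eq ?_)⟩
    push_cast
    ring
  · -- injectivity
    intro i j i' j' hne hne'
    have hy := (hBne i j).1 hne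
    have hy' := (hBne i' j').1 hne'
    rw [hBval i j hy, hBval i' j' hy']
    intro habs
    have := hinj (a₁ := (lI i, xI i, ⟨yv (lI i) j, hy⟩))
      (a₂ := (lI i', xI i', ⟨yv (lI i') j', hy'⟩)) habs
    rw [Prod.mk.injEq, Prod.mk.injEq] at this
    obtain ⟨hl, hx, hyy⟩ := this
    have hii : i = i' := by
      have hdiv : (i : ℕ) / a = (i' : ℕ) / a := congrArg Fin.val hl
      have hmod : (i : ℕ) % a = (i' : ℕ) % a := congrArg Fin.val hx
      apply Fin.ext
      calc (i : ℕ) = a * ((i : ℕ) / a) + (i : ℕ) % a := (Nat.div_add_mod _ _).symm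
        _ = a * ((i' : ℕ) / a) + (i' : ℕ) % a := by rw [hdiv, hmod]
        _ = (i' : ℕ) := Nat.div_add_mod _ _
    have hjj : j = j' := by
      have hyv' : yv (lI i) j = yv (lI i') j' := congrArg Fin.val hyy
      have : σ (lI i) j = σ (lI i) j' := by
        apply Fin.ext
        show yv (lI i) j = yv (lI i) j'
        rw [hyv', hl]
      exact (σ (lI i)).injective this
    rw [hii, hjj]
  · -- row sums
    intro i
    have step1 : ∑ j, B i j = ∑ y : Fin (b * c), A' (lI i) (xI i) (y : ℕ) := by
      simp only [hB]
      exact Equiv.sum_comp (σ (lI i)) (fun y : Fin (b * c) => A' (lI i) (xI i) (y : ℕ))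
    rw [step1, Fin.sum_univ_eq_sum_range (fun t => A' (lI i) (xI i) t)]
    rw [← Finset.sum_subset (Finset.range_subset_range.2 hbe)]
    · rw [← Fin.sum_univ_eq_sum_range (fun t => A' (lI i) (xI i) t)]
      have hco : ∀ y : Fin (b * e), A' (lI i) (xI i) (y : ℕ) = A (lI i) (xI i) y := by
        intro y
        rw [hA'pos _ _ _ y.2]
      rw [Finset.sum_congr rfl (fun y _ => hco y)]
      exact hrowA _ _
    · intro t _ ht
      rw [Finset.mem_range] at ht
      exact hA'neg _ _ _ ht
  · -- column sums
    intro j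
    have step1 : ∑ i, B i j = ∑ p : Fin c × Fin a, B (ρ.symm p) j := by
      exact (Equiv.sum_comp ρ.symm (fun i => B i j)).symm
    have hlρ : ∀ p : Fin c × Fin a, lI (ρ.symm p) = p.1 := by
      intro p
      have := ρ.apply_symm_apply p
      rw [hρ] at this
      exact congrArg Prod.fst this
    have hxρ : ∀ p : Fin c × Fin a, xI (ρ.symm p) = p.2 := by
      intro p
      have := ρ.apply_symm_apply p
      rw [hρ] at this
      exact congrArg Prod.snd this
    rw [step1]
    have step2 : ∀ p : Fin c × Fin a, B (ρ.symm p) j = A' p.1 p.2 (yv p.1 j) := by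
      intro p
      simp only [hB]
      rw [hlρ p, hxρ p]
    rw [Finset.sum_congr rfl (fun p _ => step2 p), Fintype.sum_prod_type]
    apply Finset.sum_eq_zero
    intro l _
    by_cases hy : yv l j < b * e
    · have hco : ∀ x : Fin a, A' l x (yv l j) = A l x ⟨yv l j, hy⟩ := by
        intro x
        rw [hA'pos _ _ _ hy]
      rw [Finset.sum_congr rfl (fun x _ => hco x)]
      exact hcolA _ _
    · apply Finset.sum_eq_zero
      intro x _
      exact hA'neg _ _ _ hy
end

section
/- Let a, b, c, e be positive integers. If there exists an integer Heffter array set IHS(a, b; c·e), then there exists an integer Heffter array set IHS(a, b·e; c). -/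
theorem IHS_of_IHS_mul
    (a b c e : ℕ) (ha : 0 < a) (hb : 0 < b) (hc : 0 < c) (he : 0 < e)
    (h : ∃ A : Fin (c * e) → Matrix (Fin a) (Fin b) ℤ, IsIHS a b (c * e) A) :
    ∃ B : Fin c → Matrix (Fin a) (Fin (b * e)) ℤ, IsIHS a (b * e) c B := by
  obtain ⟨A, hinj, hrange, hrow, hcol⟩ := h
  set eq1 : Fin c × Fin e ≃ Fin (c * e) := finProdFinEquiv with heq1
  set eq2 : Fin b × Fin e ≃ Fin (b * e) := finProdFinEquiv with heq2
  refine ⟨fun l i j => A (eq1 (l, (eq2.symm j).2)) i (eq2.symm j).1, ?_, ?_, ?_, ?_⟩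
  · rintro ⟨l, i, j⟩ ⟨l', i', j'⟩ hp
    have h0 : ((eq1 (l, (eq2.symm j).2), i, (eq2.symm j).1) : Fin (c*e) × Fin a × Fin b)
        = (eq1 (l', (eq2.symm j').2), i', (eq2.symm j').1) := hinj hp
    simp only [Prod.mk.injEq] at h0
    obtain ⟨h1, h2, h3⟩ := h0
    have h4 := eq1.injective h1
    simp only [Prod.mk.injEq] at h4
    have : eq2.symm j = eq2.symm j' := Prod.ext h3 h4.2
    have hj : j = j' := eq2.symm.injective this
    simp [hj, h2, h4.1]
  · intro x
    have key : ((a : ℤ)) * ((b * e : ℕ) : ℤ) * c = (a : ℤ) * b * ((c * e : ℕ) : ℤ) := by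
      push_cast; ring
    rw [key, hrange x]
    constructor
    · rintro ⟨l, i, j, hx⟩
      refine ⟨(eq1.symm l).1, i, eq2 (j, (eq1.symm l).2), ?_⟩
      simpa using hx
    · rintro ⟨l, i, j, hx⟩
      exact ⟨eq1 (l, (eq2.symm j).2), i, (eq2.symm j).1, hx⟩
  · intro l i
    rw [← Equiv.sum_comp eq2 (fun j => A (eq1 (l, (eq2.symm j).2)) i (eq2.symm j).1)]
    simp only [Equiv.symm_apply_apply]
    rw [Fintype.sum_prod_type_right]
    simp [hrow]
  · intro l j
    exact hcol _ _
end

section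
/- Given α ∈ {0, 1} and integers u ≥ 1 and b ≥ 16u − 1, there exists a family of 2u integer matrices of size 3 × 3 such that: the absolute values of all 18u entries (over all matrices) are pairwise distinct and their set is exactly [1, 16u−1]₂ ∪ [2, 8u−2]₄ ∪ [b+1, b+4u] ∪ [b+10u+1, b+12u] ∪ [b+16u+1, b+18u]; every matrix in the family has all three row sums equal to 0; and every matrix has column sums equal to (4α, −2α, −2α) (first, second, third column respectively). -/
/-- `iSet d a b` is the set `[a, b]_d = {a, a + d, a + 2d, …, b}` (the integers
`x` with `a ≤ x ≤ b` and `x ≡ a (mod d)`). -/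
def iSet (d a b : ℤ) : Set ℤ := {x | a ≤ x ∧ x ≤ b ∧ d ∣ (x - a)}

/-- The `k`-th matrix in the family. -/
def Aent (α u b : ℤ) (k : ℕ) : Matrix (Fin 3) (Fin 3) ℤ :=
  if k % 2 = 0 then
    Matrix.of ![![-(8*u+1+2*(k:ℤ)), -(b+2*u-(k:ℤ)), b+10*u+1+(k:ℤ)],
      ![16*u-1-2*(k:ℤ), b+2*u+1+(k:ℤ), -(b+18*u-(k:ℤ))],
      ![4*α-(8*u-2-4*(k:ℤ)), -2*α-(2*(k:ℤ)+1), -2*α+(8*u-1-2*(k:ℤ))]]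
  else
    Matrix.of ![![8*u+1+2*(k:ℤ), b+2*u-(k:ℤ), -(b+10*u+1+(k:ℤ))],
      ![-(16*u-1-2*(k:ℤ)), -(b+2*u+1+(k:ℤ)), b+18*u-(k:ℤ)],
      ![4*α+(8*u-2-4*(k:ℤ)), -2*α+(2*(k:ℤ)+1), -2*α-(8*u-1-2*(k:ℤ))]]

/-- The absolute values of the entries of `Aent`. -/
def Nval (α u b : ℤ) (k : ℕ) : Matrix (Fin 3) (Fin 3) ℤ :=
  Matrix.of ![![8*u+1+2*(k:ℤ), b+2*u-(k:ℤ), b+10*u+1+(k:ℤ)],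
    ![16*u-1-2*(k:ℤ), b+2*u+1+(k:ℤ), b+18*u-(k:ℤ)],
    if k % 2 = 0 then ![8*u-2-4*(k:ℤ)-4*α, 2*(k:ℤ)+1+2*α, 8*u-1-2*(k:ℤ)-2*α]
      else ![8*u-2-4*(k:ℤ)+4*α, 2*(k:ℤ)+1-2*α, 8*u-1-2*(k:ℤ)+2*α]]

lemma habs (α u b : ℤ) (hu : 1 ≤ u) (hb : 16*u - 1 ≤ b) (hα0 : 0 ≤ α) (hα1 : α ≤ 1)
    (k : ℕ) (hk : (k:ℤ) < 2*u) (i j : Fin 3) :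
    |Aent α u b k i j| = Nval α u b k i j := by
  by_cases hp : k % 2 = 0 <;>
  fin_cases i <;> fin_cases j <;>
  · simp [Aent, Nval, hp]
    all_goals try rw [Int.abs_eq_natAbs]
    all_goals omega

set_option maxHeartbeats 1000000 in
lemma NvalInj (α u b : ℤ) (hu : 1 ≤ u) (hb : 16*u-1 ≤ b) (hα0 : 0 ≤ α) (hα1 : α ≤ 1)
    (k k' : ℕ) (hk : (k:ℤ) < 2*u) (hk' : (k':ℤ) < 2*u) (i j i' j' : Fin 3)
    (h : Nval α u b k i j = Nval α u b k' i' j') : k = k' ∧ i = i' ∧ j = j' := by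
  have h3 : ∀ m : Fin 3, m = 0 ∨ m = 1 ∨ m = 2 := by decide
  rcases h3 i with rfl|rfl|rfl <;> rcases h3 j with rfl|rfl|rfl <;>
    rcases h3 i' with rfl|rfl|rfl <;> rcases h3 j' with rfl|rfl|rfl <;>
  · simp [Nval] at h
    try split_ifs at h
    all_goals try simp at h
    all_goals exact ⟨by omega, by first | rfl | exact (by omega : False).elim,
      by first | rfl | exact (by omega : False).elim⟩

set_option maxHeartbeats 1000000 in
lemma cover (α : ℤ) (hα : α = 0 ∨ α = 1) (u : ℕ) (b : ℤ)
    (hu : 1 ≤ (u:ℤ)) (hb : 16*(u:ℤ) - 1 ≤ b) (hα0 : 0 ≤ α) (hα1 : α ≤ 1) (x : ℤ)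
    (hx : x ∈ iSet 2 1 (16 * (u : ℤ) - 1) ∪ iSet 4 2 (8 * (u : ℤ) - 2) ∪
        iSet 1 (b + 1) (b + 4 * (u : ℤ)) ∪
        iSet 1 (b + 10 * (u : ℤ) + 1) (b + 12 * (u : ℤ)) ∪
        iSet 1 (b + 16 * (u : ℤ) + 1) (b + 18 * (u : ℤ))) :
    ∃ k : ℕ, k < 2*u ∧ ∃ i j : Fin 3, |Aent α (u:ℤ) b k i j| = x := by
  rcases hx with ((((⟨h1,h2,hd⟩|⟨h1,h2,hd⟩)|⟨h1,h2,hd⟩)|⟨h1,h2,hd⟩)|⟨h1,h2,hd⟩)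
  · -- odd numbers [1, 16u-1]
    obtain ⟨m, hm⟩ := hd
    rcases hα with rfl|rfl
    · by_cases c1 : x ≤ 4*(u:ℤ)-1
      · refine ⟨(m).toNat, by omega, 2, 1, ?_⟩
        rw [habs _ (u:ℤ) b hu hb hα0 hα1 _ (by omega)]
        simp [Nval]
        try split_ifs
        all_goals try simp
        all_goals omega
      by_cases c2 : x ≤ 8*(u:ℤ)-1
      · refine ⟨(4*(u:ℤ)-1-m).toNat, by omega, 2, 2, ?_⟩
        rw [habs _ (u:ℤ) b hu hb hα0 hα1 _ (by omega)]
        simp [Nval]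
        try split_ifs
        all_goals try simp
        all_goals omega
      by_cases c3 : x ≤ 12*(u:ℤ)-1
      · refine ⟨(m-4*(u:ℤ)).toNat, by omega, 0, 0, ?_⟩
        rw [habs _ (u:ℤ) b hu hb hα0 hα1 _ (by omega)]
        simp [Nval]
        try split_ifs
        all_goals try simp
        all_goals omega
      refine ⟨(8*(u:ℤ)-1-m).toNat, by omega, 1, 0, ?_⟩
      rw [habs _ (u:ℤ) b hu hb hα0 hα1 _ (by omega)]
      simp [Nval]
      try split_ifs
      all_goals try simp
      all_goals omega
    · by_cases c1 : x ≤ 4*(u:ℤ)-1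
      · by_cases cm : m % 2 = 0
        · refine ⟨(m+1).toNat, by omega, 2, 1, ?_⟩
          rw [habs _ (u:ℤ) b hu hb hα0 hα1 _ (by omega)]
          simp [Nval]
          try split_ifs
          all_goals try simp
          all_goals omega
        refine ⟨(m-1).toNat, by omega, 2, 1, ?_⟩
        rw [habs _ (u:ℤ) b hu hb hα0 hα1 _ (by omega)]
        simp [Nval]
        try split_ifs
        all_goals try simp
        all_goals omega
      by_cases c2 : x ≤ 8*(u:ℤ)-1
      · by_cases cm : m % 2 = 0
        · refine ⟨(4*(u:ℤ)-2-m).toNat, by omega, 2, 2, ?_⟩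
          rw [habs _ (u:ℤ) b hu hb hα0 hα1 _ (by omega)]
          simp [Nval]
          try split_ifs
          all_goals try simp
          all_goals omega
        refine ⟨(4*(u:ℤ)-m).toNat, by omega, 2, 2, ?_⟩
        rw [habs _ (u:ℤ) b hu hb hα0 hα1 _ (by omega)]
        simp [Nval]
        try split_ifs
        all_goals try simp
        all_goals omega
      by_cases c3 : x ≤ 12*(u:ℤ)-1
      · refine ⟨(m-4*(u:ℤ)).toNat, by omega, 0, 0, ?_⟩
        rw [habs _ (u:ℤ) b hu hb hα0 hα1 _ (by omega)]
        simp [Nval]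
        try split_ifs
        all_goals try simp
        all_goals omega
      refine ⟨(8*(u:ℤ)-1-m).toNat, by omega, 1, 0, ?_⟩
      rw [habs _ (u:ℤ) b hu hb hα0 hα1 _ (by omega)]
      simp [Nval]
      try split_ifs
      all_goals try simp
      all_goals omega
  · -- 2 mod 4 numbers [2, 8u-2]
    obtain ⟨n, hn⟩ := hd
    rcases hα with rfl|rfl
    · refine ⟨(2*(u:ℤ)-1-n).toNat, by omega, 2, 0, ?_⟩
      rw [habs _ (u:ℤ) b hu hb hα0 hα1 _ (by omega)]
      simp [Nval]
      try split_ifs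
      all_goals try simp
      all_goals omega
    · by_cases cn : n % 2 = 0
      · refine ⟨(2*(u:ℤ)-2-n).toNat, by omega, 2, 0, ?_⟩
        rw [habs _ (u:ℤ) b hu hb hα0 hα1 _ (by omega)]
        simp [Nval]
        try split_ifs
        all_goals try simp
        all_goals omega
      refine ⟨(2*(u:ℤ)-n).toNat, by omega, 2, 0, ?_⟩
      rw [habs _ (u:ℤ) b hu hb hα0 hα1 _ (by omega)]
      simp [Nval]
      try split_ifs
      all_goals try simp
      all_goals omega
  · -- [b+1, b+4u]
    by_cases c1 : x ≤ b + 2*(u:ℤ)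
    · refine ⟨(b+2*(u:ℤ)-x).toNat, by omega, 0, 1, ?_⟩
      rw [habs _ (u:ℤ) b hu hb hα0 hα1 _ (by omega)]
      simp [Nval]
      try split_ifs
      all_goals try simp
      all_goals omega
    refine ⟨(x-b-2*(u:ℤ)-1).toNat, by omega, 1, 1, ?_⟩
    rw [habs _ (u:ℤ) b hu hb hα0 hα1 _ (by omega)]
    simp [Nval]
    try split_ifs
    all_goals try simp
    all_goals omega
  · -- [b+10u+1, b+12u]
    refine ⟨(x-b-10*(u:ℤ)-1).toNat, by omega, 0, 2, ?_⟩
    rw [habs _ (u:ℤ) b hu hb hα0 hα1 _ (by omega)]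
    simp [Nval]
    try split_ifs
    all_goals try simp
    all_goals omega
  · -- [b+16u+1, b+18u]
    refine ⟨(b+18*(u:ℤ)-x).toNat, by omega, 1, 2, ?_⟩
    rw [habs _ (u:ℤ) b hu hb hα0 hα1 _ (by omega)]
    simp [Nval]
    try split_ifs
    all_goals try simp
    all_goals omega

theorem exists_A_alpha
    (α : ℤ) (hα : α = 0 ∨ α = 1) (u : ℕ) (hu : 1 ≤ u)
    (b : ℤ) (hb : 16 * (u : ℤ) - 1 ≤ b) :
    ∃ A : Fin (2 * u) → Matrix (Fin 3) (Fin 3) ℤ,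
      Function.Injective (fun p : Fin (2 * u) × Fin 3 × Fin 3 => |A p.1 p.2.1 p.2.2|) ∧
      {x : ℤ | ∃ l i j, |A l i j| = x} =
        iSet 2 1 (16 * (u : ℤ) - 1) ∪ iSet 4 2 (8 * (u : ℤ) - 2) ∪
        iSet 1 (b + 1) (b + 4 * (u : ℤ)) ∪
        iSet 1 (b + 10 * (u : ℤ) + 1) (b + 12 * (u : ℤ)) ∪
        iSet 1 (b + 16 * (u : ℤ) + 1) (b + 18 * (u : ℤ)) ∧
      (∀ l i, ∑ j, A l i j = 0) ∧
      (∀ l, ∑ i, A l i 0 = 4 * α ∧ ∑ i, A l i 1 = -2 * α ∧ ∑ i, A l i 2 = -2 * α) := by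
  have hα0 : 0 ≤ α := by rcases hα with rfl|rfl <;> norm_num
  have hα1 : α ≤ 1 := by rcases hα with rfl|rfl <;> norm_num
  have hu' : (1:ℤ) ≤ (u:ℤ) := by exact_mod_cast hu
  refine ⟨fun l => Aent α (u:ℤ) b l.1, ?_, ?_, ?_, ?_⟩
  · rintro ⟨k, i, j⟩ ⟨k', i', j'⟩ h
    simp only at h
    have hk : ((k.1:ℕ):ℤ) < 2*(u:ℤ) := by exact_mod_cast k.2
    have hk' : ((k'.1:ℕ):ℤ) < 2*(u:ℤ) := by exact_mod_cast k'.2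
    rw [habs α (u:ℤ) b hu' hb hα0 hα1 k.1 hk i j,
      habs α (u:ℤ) b hu' hb hα0 hα1 k'.1 hk' i' j'] at h
    obtain ⟨h1, h2, h3⟩ := NvalInj α (u:ℤ) b hu' hb hα0 hα1 k.1 k'.1 hk hk' i j i' j' h
    exact Prod.ext (Fin.val_injective h1) (Prod.ext h2 h3)
  · ext x
    constructor
    · rintro ⟨l, i, j, rfl⟩
      have hk : ((l.1:ℕ):ℤ) < 2*(u:ℤ) := by exact_mod_cast l.2
      have hval := habs α (u:ℤ) b hu' hb hα0 hα1 l.1 hk i j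
      simp only [Set.mem_union, iSet, Set.mem_setOf_eq]
      rw [hval]
      have h3 : ∀ m : Fin 3, m = 0 ∨ m = 1 ∨ m = 2 := by decide
      rcases h3 i with rfl|rfl|rfl <;> rcases h3 j with rfl|rfl|rfl <;>
      · simp [Nval]
        try split_ifs
        all_goals try simp
        all_goals omega
    · intro hx
      obtain ⟨k, hk2, i, j, hv⟩ := cover α hα u b hu' hb hα0 hα1 x hx
      exact ⟨⟨k, hk2⟩, i, j, hv⟩
  · intro l i
    by_cases hp : l.1 % 2 = 0 <;> fin_cases i <;>
      simp [Aent, hp, Fin.sum_univ_three] <;> ring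
  · intro l
    refine ⟨?_, ?_, ?_⟩ <;> by_cases hp : l.1 % 2 = 0 <;>
      simp [Aent, hp, Fin.sum_univ_three] <;> ring
end

section
/- Given integers u ≥ 1 and b ≥ 8u + 24, there exists a family of u integer matrices of size 3 × 3 such that: the absolute values of all 9u entries (over all matrices) are pairwise distinct and their set is exactly [9, 2u+7]₂ ∪ [10, 4u+6]₄ ∪ [2u+17, 6u+15]₂ ∪ [6u+25, 8u+23]₂ ∪ [b, b+u−1] ∪ [b+u+8, b+2u+7] ∪ [b+5u+16, b+6u+15] ∪ [b+8u+32, b+9u+31]; and every matrix in the family has all row sums and all column sums equal to 0. -/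
/-- The entries of the `l`-th matrix (with `k = l` ranging over `0, …, u-1`). -/
def ent (u : ℕ) (b k : ℤ) : ℕ → ℕ → ℤ
  | 0, 0 => 2*k+9
  | 0, 1 => 4*(u:ℤ)+6-4*k
  | 0, 2 => -(4*(u:ℤ)+15-2*k)
  | 1, 0 => b+(u:ℤ)-1-k
  | 1, 1 => 4*(u:ℤ)+17+2*k
  | 1, 2 => -(b+5*(u:ℤ)+16+k)
  | 2, 0 => -(b+(u:ℤ)+8+k)
  | 2, 1 => -(8*(u:ℤ)+23-2*k)
  | _, _ => b+9*(u:ℤ)+31-k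

def Amat (u : ℕ) (b : ℤ) (l : Fin u) : Matrix (Fin 3) (Fin 3) ℤ :=
  Matrix.of fun i j => ent u b ((l : ℕ) : ℤ) i.val j.val

set_option maxHeartbeats 4000000 in
theorem exists_A_two
    (u : ℕ) (hu : 1 ≤ u) (b : ℤ) (hb : 8 * (u : ℤ) + 24 ≤ b) :
    ∃ A : Fin u → Matrix (Fin 3) (Fin 3) ℤ,
      Function.Injective (fun p : Fin u × Fin 3 × Fin 3 => |A p.1 p.2.1 p.2.2|) ∧
      {x : ℤ | ∃ l i j, |A l i j| = x} =
        iSet 2 9 (2 * (u : ℤ) + 7) ∪ iSet 4 10 (4 * (u : ℤ) + 6) ∪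
        iSet 2 (2 * (u : ℤ) + 17) (6 * (u : ℤ) + 15) ∪
        iSet 2 (6 * (u : ℤ) + 25) (8 * (u : ℤ) + 23) ∪
        iSet 1 b (b + (u : ℤ) - 1) ∪
        iSet 1 (b + (u : ℤ) + 8) (b + 2 * (u : ℤ) + 7) ∪
        iSet 1 (b + 5 * (u : ℤ) + 16) (b + 6 * (u : ℤ) + 15) ∪
        iSet 1 (b + 8 * (u : ℤ) + 32) (b + 9 * (u : ℤ) + 31) ∧
      (∀ l i, ∑ j, A l i j = 0) ∧
      (∀ l j, ∑ i, A l i j = 0) := by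
  refine ⟨Amat u b, ?_, ?_, ?_, ?_⟩
  · rintro ⟨l, i, j⟩ ⟨l', i', j'⟩ h
    simp only at h
    have h1 : (l:ℕ) < u := l.isLt
    have h2 : (l':ℕ) < u := l'.isLt
    simp only [Prod.mk.injEq]
    fin_cases i <;> fin_cases j <;> fin_cases i' <;> fin_cases j' <;>
      simp only [Amat, ent, Matrix.of_apply] at h <;>
      rw [abs_eq_abs] at h <;>
      rcases h with h | h <;>
      refine ⟨Fin.ext ?_, ?_, ?_⟩ <;>
      first
        | rfl
        | omega
  · ext x
    simp only [Set.mem_setOf_eq, Set.mem_union, iSet]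
    constructor
    · rintro ⟨l, i, j, rfl⟩
      have h1 : (l:ℕ) < u := l.isLt
      fin_cases i <;> fin_cases j <;>
        simp only [Amat, ent, Matrix.of_apply] <;>
        rcases abs_cases (G := ℤ) _ with ⟨hh, hs⟩ | ⟨hh, hs⟩ <;> rw [hh] <;> omega
    · intro hx
      rcases hx with (((((((⟨hl, hr, c, hc⟩ | ⟨hl, hr, c, hc⟩) | ⟨hl, hr, c, hc⟩) |
        ⟨hl, hr, c, hc⟩) | ⟨hl, hr, c, hc⟩) | ⟨hl, hr, c, hc⟩) | ⟨hl, hr, c, hc⟩) |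
        ⟨hl, hr, c, hc⟩)
      · exact ⟨⟨c.toNat, by omega⟩, 0, 0, by
          simp only [Amat, ent, Matrix.of_apply, Fin.val_mk, Fin.val_zero, Fin.val_one, Fin.val_two]
          rw [abs_of_nonneg (by omega)]; omega⟩
      · exact ⟨⟨(u - 1 - c.toNat), by omega⟩, 0, 1, by
          simp only [Amat, ent, Matrix.of_apply, Fin.val_mk, Fin.val_zero, Fin.val_one, Fin.val_two]
          rw [abs_of_nonneg (by omega)]; omega⟩
      · by_cases hsplit : x ≤ 4*(u:ℤ)+15
        · exact ⟨⟨(u - 1 - ((x-2*u-17)/2).toNat), by omega⟩, 0, 2, by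
            simp only [Amat, ent, Matrix.of_apply, Fin.val_mk, Fin.val_zero, Fin.val_one, Fin.val_two]
            rw [abs_neg, abs_of_nonneg (by omega)]; omega⟩
        · exact ⟨⟨((x-4*u-17)/2).toNat, by omega⟩, 1, 1, by
            simp only [Amat, ent, Matrix.of_apply, Fin.val_mk, Fin.val_zero, Fin.val_one, Fin.val_two]
            rw [abs_of_nonneg (by omega)]; omega⟩
      · exact ⟨⟨(u - 1 - ((x-6*u-25)/2).toNat), by omega⟩, 2, 1, by
          simp only [Amat, ent, Matrix.of_apply, Fin.val_mk, Fin.val_zero, Fin.val_one, Fin.val_two]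
          rw [abs_neg, abs_of_nonneg (by omega)]; omega⟩
      · exact ⟨⟨(u - 1 - c.toNat), by omega⟩, 1, 0, by
          simp only [Amat, ent, Matrix.of_apply, Fin.val_mk, Fin.val_zero, Fin.val_one, Fin.val_two]
          rw [abs_of_nonneg (by omega)]; omega⟩
      · exact ⟨⟨c.toNat, by omega⟩, 2, 0, by
          simp only [Amat, ent, Matrix.of_apply, Fin.val_mk, Fin.val_zero, Fin.val_one, Fin.val_two]
          rw [abs_neg, abs_of_nonneg (by omega)]; omega⟩
      · exact ⟨⟨c.toNat, by omega⟩, 1, 2, by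
          simp only [Amat, ent, Matrix.of_apply, Fin.val_mk, Fin.val_zero, Fin.val_one, Fin.val_two]
          rw [abs_neg, abs_of_nonneg (by omega)]; omega⟩
      · exact ⟨⟨(u - 1 - c.toNat), by omega⟩, 2, 2, by
          simp only [Amat, ent, Matrix.of_apply, Fin.val_mk, Fin.val_zero, Fin.val_one, Fin.val_two]
          rw [abs_of_nonneg (by omega)]; omega⟩
  · intro l i
    fin_cases i <;> simp [Amat, ent, Fin.sum_univ_three] <;> ring
  · intro l j
    fin_cases j <;> simp [Amat, ent, Fin.sum_univ_three] <;> ring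
end

section
/- Given α ∈ {0, 1} and an integer u ≥ 1, there exists a family of u integer matrices of size 3 × 3 such that: the absolute values of all 9u entries (over all matrices) are pairwise distinct and their set is exactly [4α+9, 2u+4α+7]₂ ∪ [2u+4α+8, 3u+4α+7] ∪ [3u+8α+16, 5u+8α+15] ∪ [5u+12α+24, 6u+12α+23] ∪ [6u+12α+25, 8u+12α+23]₂ ∪ [9u+16α+32, 10u+16α+31] ∪ [11u+20α+40, 12u+20α+39] ∪ [14u+28α+56, 16u+28α+54]₂; and every matrix in the family has all row sums and all column sums equal to 0. -/
theorem exists_A_three_alpha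
    (α : ℤ) (hα : α = 0 ∨ α = 1) (u : ℕ) (hu : 1 ≤ u) :
    ∃ A : Fin u → Matrix (Fin 3) (Fin 3) ℤ,
      Function.Injective (fun p : Fin u × Fin 3 × Fin 3 => |A p.1 p.2.1 p.2.2|) ∧
      {x : ℤ | ∃ l i j, |A l i j| = x} =
        iSet 2 (4 * α + 9) (2 * (u : ℤ) + 4 * α + 7) ∪
        iSet 1 (2 * (u : ℤ) + 4 * α + 8) (3 * (u : ℤ) + 4 * α + 7) ∪
        iSet 1 (3 * (u : ℤ) + 8 * α + 16) (5 * (u : ℤ) + 8 * α + 15) ∪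
        iSet 1 (5 * (u : ℤ) + 12 * α + 24) (6 * (u : ℤ) + 12 * α + 23) ∪
        iSet 2 (6 * (u : ℤ) + 12 * α + 25) (8 * (u : ℤ) + 12 * α + 23) ∪
        iSet 1 (9 * (u : ℤ) + 16 * α + 32) (10 * (u : ℤ) + 16 * α + 31) ∪
        iSet 1 (11 * (u : ℤ) + 20 * α + 40) (12 * (u : ℤ) + 20 * α + 39) ∪
        iSet 2 (14 * (u : ℤ) + 28 * α + 56) (16 * (u : ℤ) + 28 * α + 54) ∧
      (∀ l i, ∑ j, A l i j = 0) ∧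
      (∀ l j, ∑ i, A l i j = 0) := by
  have hα0 : 0 ≤ α := by rcases hα with h | h <;> omega
  have hα1 : α ≤ 1 := by rcases hα with h | h <;> omega
  refine ⟨fun l => !![2*(l:ℤ) + 4*α + 9, 3*(u:ℤ) + 4*α + 7 - (l:ℤ), -((l:ℤ) + 3*(u:ℤ) + 8*α + 16);
      5*(u:ℤ) + 8*α + 15 - (l:ℤ), 2*(l:ℤ) + 6*(u:ℤ) + 12*α + 25, -((l:ℤ) + 11*(u:ℤ) + 20*α + 40);
      -((l:ℤ) + 5*(u:ℤ) + 12*α + 24), -((l:ℤ) + 9*(u:ℤ) + 16*α + 32), 2*(l:ℤ) + 14*(u:ℤ) + 28*α + 56],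
      ?_, ?_, ?_, ?_⟩
  · rintro ⟨l, i, j⟩ ⟨l', i', j'⟩ h
    have hl := l.isLt
    have hl' := l'.isLt
    simp only at h
    fin_cases i <;> fin_cases j <;> fin_cases i' <;> fin_cases j' <;>
      simp only [Fin.mk_zero, Fin.mk_one, Fin.isValue, show (⟨2, by norm_num⟩ : Fin 3) = 2 from rfl,
        Matrix.cons_val', Matrix.cons_val_zero, Matrix.cons_val_one, Matrix.cons_val_two,
        Matrix.tail_cons, Matrix.head_cons, Matrix.head_fin_const, Matrix.empty_val',
        Matrix.cons_val_fin_one, Matrix.of_apply] at h <;>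
      rw [abs_eq_abs] at h <;>
      simp only [Prod.mk.injEq, Fin.mk.injEq, Fin.ext_iff, and_true, true_and] <;>
      rcases h with h | h <;> omega
  · ext x
    simp only [Set.mem_setOf_eq, Set.mem_union, iSet]
    constructor
    · rintro ⟨l, i, j, rfl⟩
      have hl := l.isLt
      fin_cases i <;> fin_cases j <;>
        simp only [Fin.mk_zero, Fin.mk_one, Fin.isValue, show (⟨2, by norm_num⟩ : Fin 3) = 2 from rfl,
          Matrix.cons_val', Matrix.cons_val_zero, Matrix.cons_val_one, Matrix.cons_val_two,
          Matrix.tail_cons, Matrix.head_cons, Matrix.head_fin_const, Matrix.empty_val',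
          Matrix.cons_val_fin_one, Matrix.of_apply] <;>
        rcases abs_cases (G := ℤ) _ with ⟨h1, h2⟩ | ⟨h1, h2⟩ <;> rw [h1] <;> omega
    · intro hx
      rcases hx with (((((((⟨ha, hb, m, hm⟩ | ⟨ha, hb, m, hm⟩) | ⟨ha, hb, m, hm⟩) |
        ⟨ha, hb, m, hm⟩) | ⟨ha, hb, m, hm⟩) | ⟨ha, hb, m, hm⟩) | ⟨ha, hb, m, hm⟩) |
        ⟨ha, hb, m, hm⟩)
      · refine ⟨⟨m.toNat, by omega⟩, 0, 0, ?_⟩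
        simp only [Matrix.cons_val', Matrix.cons_val_zero, Matrix.cons_val_one, Matrix.cons_val_two,
          Matrix.tail_cons, Matrix.head_cons, Matrix.head_fin_const, Matrix.empty_val',
          Matrix.cons_val_fin_one, Matrix.of_apply]
        rcases abs_cases (G := ℤ) _ with ⟨h1, h2⟩ | ⟨h1, h2⟩ <;> rw [h1] <;> omega
      · refine ⟨⟨(3*(u:ℤ) + 4*α + 7 - x).toNat, by omega⟩, 0, 1, ?_⟩
        simp only [Matrix.cons_val', Matrix.cons_val_zero, Matrix.cons_val_one, Matrix.cons_val_two,
          Matrix.tail_cons, Matrix.head_cons, Matrix.head_fin_const, Matrix.empty_val',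
          Matrix.cons_val_fin_one, Matrix.of_apply]
        rcases abs_cases (G := ℤ) _ with ⟨h1, h2⟩ | ⟨h1, h2⟩ <;> rw [h1] <;> omega
      · rcases le_or_gt x (4*(u:ℤ) + 8*α + 15) with hc | hc
        · refine ⟨⟨(x - (3*(u:ℤ) + 8*α + 16)).toNat, by omega⟩, 0, 2, ?_⟩
          simp only [Matrix.cons_val', Matrix.cons_val_zero, Matrix.cons_val_one, Matrix.cons_val_two,
            Matrix.tail_cons, Matrix.head_cons, Matrix.head_fin_const, Matrix.empty_val',
            Matrix.cons_val_fin_one, Matrix.of_apply]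
          rcases abs_cases (G := ℤ) _ with ⟨h1, h2⟩ | ⟨h1, h2⟩ <;> rw [h1] <;> omega
        · refine ⟨⟨(5*(u:ℤ) + 8*α + 15 - x).toNat, by omega⟩, 1, 0, ?_⟩
          simp only [Matrix.cons_val', Matrix.cons_val_zero, Matrix.cons_val_one, Matrix.cons_val_two,
            Matrix.tail_cons, Matrix.head_cons, Matrix.head_fin_const, Matrix.empty_val',
            Matrix.cons_val_fin_one, Matrix.of_apply]
          rcases abs_cases (G := ℤ) _ with ⟨h1, h2⟩ | ⟨h1, h2⟩ <;> rw [h1] <;> omega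
      · refine ⟨⟨(x - (5*(u:ℤ) + 12*α + 24)).toNat, by omega⟩, 2, 0, ?_⟩
        simp only [Matrix.cons_val', Matrix.cons_val_zero, Matrix.cons_val_one, Matrix.cons_val_two,
          Matrix.tail_cons, Matrix.head_cons, Matrix.head_fin_const, Matrix.empty_val',
          Matrix.cons_val_fin_one, Matrix.of_apply]
        rcases abs_cases (G := ℤ) _ with ⟨h1, h2⟩ | ⟨h1, h2⟩ <;> rw [h1] <;> omega
      · refine ⟨⟨m.toNat, by omega⟩, 1, 1, ?_⟩
        simp only [Matrix.cons_val', Matrix.cons_val_zero, Matrix.cons_val_one, Matrix.cons_val_two,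
          Matrix.tail_cons, Matrix.head_cons, Matrix.head_fin_const, Matrix.empty_val',
          Matrix.cons_val_fin_one, Matrix.of_apply]
        rcases abs_cases (G := ℤ) _ with ⟨h1, h2⟩ | ⟨h1, h2⟩ <;> rw [h1] <;> omega
      · refine ⟨⟨(x - (9*(u:ℤ) + 16*α + 32)).toNat, by omega⟩, 2, 1, ?_⟩
        simp only [Matrix.cons_val', Matrix.cons_val_zero, Matrix.cons_val_one, Matrix.cons_val_two,
          Matrix.tail_cons, Matrix.head_cons, Matrix.head_fin_const, Matrix.empty_val',
          Matrix.cons_val_fin_one, Matrix.of_apply]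
        rcases abs_cases (G := ℤ) _ with ⟨h1, h2⟩ | ⟨h1, h2⟩ <;> rw [h1] <;> omega
      · refine ⟨⟨(x - (11*(u:ℤ) + 20*α + 40)).toNat, by omega⟩, 1, 2, ?_⟩
        simp only [Matrix.cons_val', Matrix.cons_val_zero, Matrix.cons_val_one, Matrix.cons_val_two,
          Matrix.tail_cons, Matrix.head_cons, Matrix.head_fin_const, Matrix.empty_val',
          Matrix.cons_val_fin_one, Matrix.of_apply]
        rcases abs_cases (G := ℤ) _ with ⟨h1, h2⟩ | ⟨h1, h2⟩ <;> rw [h1] <;> omega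
      · refine ⟨⟨m.toNat, by omega⟩, 2, 2, ?_⟩
        simp only [Matrix.cons_val', Matrix.cons_val_zero, Matrix.cons_val_one, Matrix.cons_val_two,
          Matrix.tail_cons, Matrix.head_cons, Matrix.head_fin_const, Matrix.empty_val',
          Matrix.cons_val_fin_one, Matrix.of_apply]
        rcases abs_cases (G := ℤ) _ with ⟨h1, h2⟩ | ⟨h1, h2⟩ <;> rw [h1] <;> omega
  · intro l i
    fin_cases i <;>
      simp only [Fin.sum_univ_three, Fin.mk_zero, Fin.mk_one, Fin.isValue,
        show (⟨2, by norm_num⟩ : Fin 3) = 2 from rfl,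
        Matrix.cons_val', Matrix.cons_val_zero, Matrix.cons_val_one, Matrix.cons_val_two,
        Matrix.tail_cons, Matrix.head_cons, Matrix.head_fin_const, Matrix.empty_val',
        Matrix.cons_val_fin_one, Matrix.of_apply] <;> ring
  · intro l j
    fin_cases j <;>
      simp only [Fin.sum_univ_three, Fin.mk_zero, Fin.mk_one, Fin.isValue,
        show (⟨2, by norm_num⟩ : Fin 3) = 2 from rfl,
        Matrix.cons_val', Matrix.cons_val_zero, Matrix.cons_val_one, Matrix.cons_val_two,
        Matrix.tail_cons, Matrix.head_cons, Matrix.head_fin_const, Matrix.empty_val',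
        Matrix.cons_val_fin_one, Matrix.of_apply] <;> ring
end

section
/- Given δ ∈ {0, 1} and three nonnegative integers b, ℓ, u, there exists a family 𝔅 of 2 × 3 integer matrices that is the disjoint union of two subfamilies 𝔅′ and 𝔅″ such that: |𝔅′| = 2ℓ and |𝔅″| = 2u; every matrix in 𝔅′ has row sums (0, 0) and column sums (−2, 1, 1); every matrix in 𝔅″ has row sums (0, 0) and column sums (−4, 2, 2); and the absolute values of all entries of 𝔅 are pairwise distinct with set exactly [2b+1, 2b+8u+8ℓ−1]₂ ∪ [2b+8u+8ℓ+δ, 2b+12u+12ℓ+δ−1] ∪ [4b+12u+12ℓ+δ, 4b+16u+16ℓ+δ−1]. -/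
/-- The family of matrices realizing `exists_B_delta`. -/
def BdeltaMat (δ : ℤ) (b l u : ℕ) : Fin (2 * l) ⊕ Fin (2 * u) → Matrix (Fin 2) (Fin 3) ℤ
  | Sum.inl k => Matrix.of fun i j =>
      if (i : ℕ) = 0 then
        if (j : ℕ) = 0 then 2*(b:ℤ)+1+4*(k:ℤ)
        else if (j : ℕ) = 1 then 2*(b:ℤ)+12*((u:ℤ)+(l:ℤ))+δ-1-2*(k:ℤ)
        else -(4*(b:ℤ)+12*((u:ℤ)+(l:ℤ))+δ+2*(k:ℤ))
      else
        if (j : ℕ) = 0 then -(2*(b:ℤ)+3+4*(k:ℤ))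
        else if (j : ℕ) = 1 then -(2*(b:ℤ)+12*((u:ℤ)+(l:ℤ))+δ-2-2*(k:ℤ))
        else 4*(b:ℤ)+12*((u:ℤ)+(l:ℤ))+δ+2*(k:ℤ)+1
  | Sum.inr p => Matrix.of fun i j =>
      if (i : ℕ) = 0 then
        if (j : ℕ) = 0 then 2*(b:ℤ)+8*(l:ℤ)+1+8*((p:ℕ)/2:ℕ)+2*((p:ℕ)%2:ℕ)
        else if (j : ℕ) = 1 then
          2*(b:ℤ)+8*((u:ℤ)+(l:ℤ))+δ+4*(u:ℤ)-1-4*((p:ℕ)/2:ℕ)-((p:ℕ)%2:ℕ)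
        else -(4*(b:ℤ)+12*(u:ℤ)+16*(l:ℤ)+δ+4*((p:ℕ)/2:ℕ)+((p:ℕ)%2:ℕ))
      else
        if (j : ℕ) = 0 then -(2*(b:ℤ)+8*(l:ℤ)+5+8*((p:ℕ)/2:ℕ)+2*((p:ℕ)%2:ℕ))
        else if (j : ℕ) = 1 then
          -(2*(b:ℤ)+8*((u:ℤ)+(l:ℤ))+δ+4*(u:ℤ)-3-4*((p:ℕ)/2:ℕ)-((p:ℕ)%2:ℕ))
        else 4*(b:ℤ)+12*(u:ℤ)+16*(l:ℤ)+δ+4*((p:ℕ)/2:ℕ)+((p:ℕ)%2:ℕ)+2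

/-- The absolute values of the entries of `BdeltaMat`. -/
def BdeltaAbs (δ : ℤ) (b l u : ℕ) :
    (Fin (2 * l) ⊕ Fin (2 * u)) × Fin 2 × Fin 3 → ℤ
  | (Sum.inl k, i, j) =>
      if (j:ℕ) = 0 then 2*(b:ℤ)+1+4*(k:ℤ)+2*(i:ℤ)
      else if (j:ℕ) = 1 then 2*(b:ℤ)+12*((u:ℤ)+(l:ℤ))+δ-1-2*(k:ℤ)-(i:ℤ)
      else 4*(b:ℤ)+12*((u:ℤ)+(l:ℤ))+δ+2*(k:ℤ)+(i:ℤ)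
  | (Sum.inr p, i, j) =>
      if (j:ℕ) = 0 then 2*(b:ℤ)+8*(l:ℤ)+1+8*((p:ℕ)/2:ℕ)+2*((p:ℕ)%2:ℕ)+4*(i:ℤ)
      else if (j:ℕ) = 1 then
        2*(b:ℤ)+8*((u:ℤ)+(l:ℤ))+δ+4*(u:ℤ)-1-4*((p:ℕ)/2:ℕ)-((p:ℕ)%2:ℕ)-2*(i:ℤ)
      else 4*(b:ℤ)+12*(u:ℤ)+16*(l:ℤ)+δ+4*((p:ℕ)/2:ℕ)+((p:ℕ)%2:ℕ)+2*(i:ℤ)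

lemma BdeltaMat_abs (δ : ℤ) (hδ : 0 ≤ δ) (b l u : ℕ)
    (p : Fin (2 * l) ⊕ Fin (2 * u)) (i : Fin 2) (j : Fin 3) :
    |BdeltaMat δ b l u p i j| = BdeltaAbs δ b l u (p, i, j) := by
  rcases p with ⟨k, hk⟩ | ⟨p, hp⟩ <;>
    fin_cases i <;> fin_cases j <;>
      simp only [BdeltaMat, BdeltaAbs, Matrix.of_apply, Fin.isValue, Fin.val_zero,
        Fin.val_one, Fin.val_two, Fin.mk_zero, Fin.mk_one, if_true, if_false,
        Int.abs_eq_natAbs, reduceIte] <;>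
      omega

lemma BdeltaAbs_inj (δ : ℤ) (hδ0 : 0 ≤ δ) (hδ1 : δ ≤ 1) (b l u : ℕ) :
    Function.Injective (BdeltaAbs δ b l u) := by
  rintro ⟨p, i, j⟩ ⟨p', i', j'⟩ h
  have hi := i.isLt
  have hi' := i'.isLt
  rcases p with ⟨k, hk⟩ | ⟨k, hk⟩ <;> rcases p' with ⟨k', hk'⟩ | ⟨k', hk'⟩ <;>
    fin_cases j <;> fin_cases j' <;>
      simp [BdeltaAbs, Prod.ext_iff, Sum.inl.injEq, Sum.inr.injEq, Fin.ext_iff] at h ⊢ <;>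
      omega

lemma BdeltaMat_rows (δ : ℤ) (b l u : ℕ) (p : Fin (2 * l) ⊕ Fin (2 * u)) (i : Fin 2) :
    ∑ j, BdeltaMat δ b l u p i j = 0 := by
  rcases p with k | p <;> fin_cases i <;>
    simp [BdeltaMat, Fin.sum_univ_three] <;> ring

lemma BdeltaMat_colsL (δ : ℤ) (b l u : ℕ) (p : Fin (2 * l)) :
    ∑ i, BdeltaMat δ b l u (Sum.inl p) i 0 = -2 ∧
    ∑ i, BdeltaMat δ b l u (Sum.inl p) i 1 = 1 ∧
    ∑ i, BdeltaMat δ b l u (Sum.inl p) i 2 = 1 := by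
  refine ⟨?_, ?_, ?_⟩ <;> simp [BdeltaMat, Fin.sum_univ_two] <;> ring

lemma BdeltaMat_colsR (δ : ℤ) (b l u : ℕ) (p : Fin (2 * u)) :
    ∑ i, BdeltaMat δ b l u (Sum.inr p) i 0 = -4 ∧
    ∑ i, BdeltaMat δ b l u (Sum.inr p) i 1 = 2 ∧
    ∑ i, BdeltaMat δ b l u (Sum.inr p) i 2 = 2 := by
  refine ⟨?_, ?_, ?_⟩ <;> simp [BdeltaMat, Fin.sum_univ_two] <;> ring

lemma BdeltaAbs_range (δ : ℤ) (hδ0 : 0 ≤ δ) (hδ1 : δ ≤ 1) (b l u : ℕ) :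
    {x : ℤ | ∃ p i j, BdeltaAbs δ b l u (p, i, j) = x} =
      iSet 2 (2 * (b : ℤ) + 1) (2 * (b : ℤ) + 8 * (u : ℤ) + 8 * (l : ℤ) - 1) ∪
      iSet 1 (2 * (b : ℤ) + 8 * (u : ℤ) + 8 * (l : ℤ) + δ)
        (2 * (b : ℤ) + 12 * (u : ℤ) + 12 * (l : ℤ) + δ - 1) ∪
      iSet 1 (4 * (b : ℤ) + 12 * (u : ℤ) + 12 * (l : ℤ) + δ)
        (4 * (b : ℤ) + 16 * (u : ℤ) + 16 * (l : ℤ) + δ - 1) := by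
  ext x
  simp only [Set.mem_setOf_eq, Set.mem_union, iSet]
  constructor
  · rintro ⟨p, i, j, rfl⟩
    have hi := i.isLt
    rcases p with ⟨k, hk⟩ | ⟨k, hk⟩ <;> fin_cases j <;>
      simp [BdeltaAbs] <;> omega
  · rintro ((⟨h1, h2, h3⟩ | ⟨h1, h2, h3⟩) | ⟨h1, h2, h3⟩)
    · by_cases hc : x ≤ 2*(b:ℤ)+8*(l:ℤ)-1
      · exact ⟨Sum.inl ⟨(x - (2*(b:ℤ)+1)).toNat/4, by omega⟩,
          ⟨(x - (2*(b:ℤ)+1)).toNat%4/2, by omega⟩, 0, by simp [BdeltaAbs]; omega⟩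
      · exact ⟨Sum.inr ⟨(x - (2*(b:ℤ)+8*(l:ℤ)+1)).toNat/8*2 +
            (x - (2*(b:ℤ)+8*(l:ℤ)+1)).toNat%8%4/2, by omega⟩,
          ⟨(x - (2*(b:ℤ)+8*(l:ℤ)+1)).toNat%8/4, by omega⟩, 0,
          by simp [BdeltaAbs]; omega⟩
    · by_cases hc : x ≤ 2*(b:ℤ)+8*((u:ℤ)+(l:ℤ))+δ+4*(u:ℤ)-1
      · exact ⟨Sum.inr ⟨(2*(b:ℤ)+8*((u:ℤ)+(l:ℤ))+δ+4*(u:ℤ)-1 - x).toNat/4*2 +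
            (2*(b:ℤ)+8*((u:ℤ)+(l:ℤ))+δ+4*(u:ℤ)-1 - x).toNat%4%2, by omega⟩,
          ⟨(2*(b:ℤ)+8*((u:ℤ)+(l:ℤ))+δ+4*(u:ℤ)-1 - x).toNat%4/2, by omega⟩, 1,
          by simp [BdeltaAbs]; omega⟩
      · exact ⟨Sum.inl ⟨(2*(b:ℤ)+12*((u:ℤ)+(l:ℤ))+δ-1 - x).toNat/2, by omega⟩,
          ⟨(2*(b:ℤ)+12*((u:ℤ)+(l:ℤ))+δ-1 - x).toNat%2, by omega⟩, 1,
          by simp [BdeltaAbs]; omega⟩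
    · by_cases hc : x ≤ 4*(b:ℤ)+12*((u:ℤ)+(l:ℤ))+δ+4*(l:ℤ)-1
      · exact ⟨Sum.inl ⟨(x - (4*(b:ℤ)+12*((u:ℤ)+(l:ℤ))+δ)).toNat/2, by omega⟩,
          ⟨(x - (4*(b:ℤ)+12*((u:ℤ)+(l:ℤ))+δ)).toNat%2, by omega⟩, 2,
          by simp [BdeltaAbs]; omega⟩
      · exact ⟨Sum.inr ⟨(x - (4*(b:ℤ)+12*(u:ℤ)+16*(l:ℤ)+δ)).toNat/4*2 +
            (x - (4*(b:ℤ)+12*(u:ℤ)+16*(l:ℤ)+δ)).toNat%4%2, by omega⟩,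
          ⟨(x - (4*(b:ℤ)+12*(u:ℤ)+16*(l:ℤ)+δ)).toNat%4/2, by omega⟩, 2,
          by simp [BdeltaAbs]; omega⟩

theorem exists_B_delta
    (δ : ℤ) (hδ : δ = 0 ∨ δ = 1) (b l u : ℕ) :
    ∃ B : Fin (2 * l) ⊕ Fin (2 * u) → Matrix (Fin 2) (Fin 3) ℤ,
      (∀ p i, ∑ j, B p i j = 0) ∧
      (∀ p : Fin (2 * l),
        ∑ i, B (Sum.inl p) i 0 = -2 ∧ ∑ i, B (Sum.inl p) i 1 = 1 ∧
        ∑ i, B (Sum.inl p) i 2 = 1) ∧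
      (∀ p : Fin (2 * u),
        ∑ i, B (Sum.inr p) i 0 = -4 ∧ ∑ i, B (Sum.inr p) i 1 = 2 ∧
        ∑ i, B (Sum.inr p) i 2 = 2) ∧
      Function.Injective
        (fun q : (Fin (2 * l) ⊕ Fin (2 * u)) × Fin 2 × Fin 3 => |B q.1 q.2.1 q.2.2|) ∧
      {x : ℤ | ∃ p i j, |B p i j| = x} =
        iSet 2 (2 * (b : ℤ) + 1) (2 * (b : ℤ) + 8 * (u : ℤ) + 8 * (l : ℤ) - 1) ∪
        iSet 1 (2 * (b : ℤ) + 8 * (u : ℤ) + 8 * (l : ℤ) + δ)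
          (2 * (b : ℤ) + 12 * (u : ℤ) + 12 * (l : ℤ) + δ - 1) ∪
        iSet 1 (4 * (b : ℤ) + 12 * (u : ℤ) + 12 * (l : ℤ) + δ)
          (4 * (b : ℤ) + 16 * (u : ℤ) + 16 * (l : ℤ) + δ - 1) := by
  have h0 : 0 ≤ δ := by rcases hδ with h | h <;> omega
  have h1 : δ ≤ 1 := by rcases hδ with h | h <;> omega
  refine ⟨BdeltaMat δ b l u, BdeltaMat_rows δ b l u, BdeltaMat_colsL δ b l u,
    BdeltaMat_colsR δ b l u, ?_, ?_⟩
  · have he : (fun q : (Fin (2 * l) ⊕ Fin (2 * u)) × Fin 2 × Fin 3 =>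
        |BdeltaMat δ b l u q.1 q.2.1 q.2.2|) = BdeltaAbs δ b l u :=
      funext fun q => BdeltaMat_abs δ h0 b l u q.1 q.2.1 q.2.2
    rw [he]
    exact BdeltaAbs_inj δ h0 h1 b l u
  · have he : ∀ p i j, |BdeltaMat δ b l u p i j| = BdeltaAbs δ b l u (p, i, j) :=
      BdeltaMat_abs δ h0 b l u
    simp only [he]
    exact BdeltaAbs_range δ h0 h1 b l u
end

section
/- Given integers b, ℓ, u with ℓ ≥ u ≥ 0 and b ≥ 10ℓ, there exists a family 𝔅 of 2 × 3 integer matrices that is the disjoint union of two subfamilies 𝔅⁰ and 𝔅¹ such that: |𝔅⁰| = 2(ℓ − u) and |𝔅¹| = 2u; every matrix in 𝔅⁰ has row sums (0, 0) and column sums (−4, 2, 2); every matrix in 𝔅¹ has row sums (2, −2) and column sums (−4, 2, 2); and the absolute values of all entries of 𝔅 are pairwise distinct with set exactly [b−6ℓ+1, b+2ℓ] ∪ [2b−8ℓ+2, 2b]₂. -/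
namespace EBT

def matF (s r t : ℤ) : Matrix (Fin 2) (Fin 3) ℤ := !![-(s+4), r+2, t+2; s, -r, -t]
def matG (s r t : ℤ) : Matrix (Fin 2) (Fin 3) ℤ := !![s, -r, -t; -(s+4), r+2, t+2]

def sv (l : ℕ) (b : ℤ) (k a : ℕ) : ℤ := 2*b - 8*l + 2 + 8*k + 2*a
def rv (l : ℕ) (b : ℤ) (k d : ℕ) : ℤ := b - 6*l + 1 + 4*k + d
def tv (l : ℕ) (b : ℤ) (k d : ℕ) : ℤ := b - 6*l + 1 + 4*l + 4*k + d

def Bd (l u : ℕ) (b : ℤ) : Fin (2*(l-u)) ⊕ Fin (2*u) → Matrix (Fin 2) (Fin 3) ℤ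
  | .inl p => matF (sv l b (p.val/2) (p.val%2)) (rv l b (p.val/2) (p.val%2)) (tv l b (p.val/2) (p.val%2))
  | .inr p =>
      if p.val % 2 = 0 then
        matF (sv l b ((l-u)+p.val/2) 0) (rv l b ((l-u)+p.val/2) 1) (tv l b ((l-u)+p.val/2) 1)
      else
        matG (sv l b ((l-u)+p.val/2) 1) (rv l b ((l-u)+p.val/2) 0) (tv l b ((l-u)+p.val/2) 0)

def val (l : ℕ) (b : ℤ) (n : ℕ) : ℤ :=
  if n < 4*l then 2*b - 8*l + 2 + 2*n else b - 6*l + 1 + ((n:ℤ) - 4*l)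

def jof (l j : ℕ) : ℕ := if j = 0 then 0 else if j = 1 then 4*l else 8*l
def fF (l k a d i j : ℕ) : ℕ := jof l j + 4*k + (if j = 0 then a else d) + 2 - 2*i
def fG (l k a d i j : ℕ) : ℕ := jof l j + 4*k + (if j = 0 then a else d) + 2*i

def fB (l u : ℕ) : (Fin (2*(l-u)) ⊕ Fin (2*u)) × Fin 2 × Fin 3 → ℕ
  | (.inl p, i, j) => fF l (p.val/2) (p.val%2) (p.val%2) i.val j.val
  | (.inr p, i, j) =>
      if p.val % 2 = 0 then fF l ((l-u)+p.val/2) 0 1 i.val j.val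
      else fG l ((l-u)+p.val/2) 1 0 i.val j.val

lemma absF (l : ℕ) (b : ℤ) (hb : 10*(l:ℤ) ≤ b) (k a d : ℕ) (hk : k < l) (ha : a < 2) (hd : d < 2)
    (i : Fin 2) (j : Fin 3) :
    |matF (sv l b k a) (rv l b k d) (tv l b k d) i j| = val l b (fF l k a d i.val j.val) := by
  fin_cases i <;> fin_cases j <;>
    simp only [matF, sv, rv, tv, fF, jof, val, Matrix.cons_val', Matrix.cons_val_zero,
      Matrix.cons_val_one, Matrix.head_cons, Matrix.empty_val', Matrix.cons_val_fin_one,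
      Matrix.head_fin_const, Matrix.of_apply, Fin.isValue] <;>
    norm_num <;>
    first
      | (rw [abs_of_nonpos (by omega)]; omega)
      | (rw [abs_of_nonneg (by omega)]; omega)


lemma absG (l : ℕ) (b : ℤ) (hb : 10*(l:ℤ) ≤ b) (k a d : ℕ) (hk : k < l) (ha : a < 2) (hd : d < 2)
    (i : Fin 2) (j : Fin 3) :
    |matG (sv l b k a) (rv l b k d) (tv l b k d) i j| = val l b (fG l k a d i.val j.val) := by
  fin_cases i <;> fin_cases j <;>
    simp only [matG, sv, rv, tv, fG, jof, val, Matrix.cons_val', Matrix.cons_val_zero,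
      Matrix.cons_val_one, Matrix.head_cons, Matrix.empty_val', Matrix.cons_val_fin_one,
      Matrix.head_fin_const, Matrix.of_apply, Fin.isValue] <;>
    norm_num <;>
    first
      | (rw [abs_of_nonpos (by omega)]; omega)
      | (rw [abs_of_nonneg (by omega)]; omega)

lemma absB (l u : ℕ) (b : ℤ) (hul : u ≤ l) (hb : 10*(l:ℤ) ≤ b)
    (q : (Fin (2*(l-u)) ⊕ Fin (2*u)) × Fin 2 × Fin 3) :
    |Bd l u b q.1 q.2.1 q.2.2| = val l b (fB l u q) := by
  obtain ⟨p | p, i, j⟩ := q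
  · have hp := p.isLt
    exact absF l b hb _ _ _ (by omega) (by omega) (by omega) i j
  · have hp := p.isLt
    by_cases h2 : p.val % 2 = 0 <;> simp only [Bd, fB, h2, if_true, if_false, reduceIte]
    · exact absF l b hb _ _ _ (by omega) (by omega) (by omega) i j
    · exact absG l b hb _ _ _ (by omega) (by omega) (by omega) i j

lemma fB_lt (l u : ℕ) (hul : u ≤ l) (q : (Fin (2*(l-u)) ⊕ Fin (2*u)) × Fin 2 × Fin 3) :
    fB l u q < 12*l := by
  obtain ⟨p | p, i, j⟩ := q <;> have hp := p.isLt <;> have hi := i.isLt <;> have hj := j.isLt <;>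
    simp only [fB, fF, fG, jof] <;> split_ifs <;> omega

lemma val_inj (l : ℕ) (b : ℤ) (hb : 10*(l:ℤ) ≤ b) {n1 n2 : ℕ}
    (h1 : n1 < 12*l) (h2 : n2 < 12*l) (h : val l b n1 = val l b n2) : n1 = n2 := by
  simp only [val] at h; split_ifs at h <;> omega


set_option maxHeartbeats 1000000 in
lemma fB_inj (l u : ℕ) (hul : u ≤ l) {q1 q2 : (Fin (2*(l-u)) ⊕ Fin (2*u)) × Fin 2 × Fin 3}
    (h : fB l u q1 = fB l u q2) : q1 = q2 := by
  obtain ⟨p1 | p1, i1, j1⟩ := q1 <;> obtain ⟨p2 | p2, i2, j2⟩ := q2 <;>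
    have hp1 := p1.isLt <;> have hp2 := p2.isLt <;>
    have hi1 := i1.isLt <;> have hi2 := i2.isLt <;>
    have hj1 := j1.isLt <;> have hj2 := j2.isLt
  · have : p1.val = p2.val ∧ i1.val = i2.val ∧ j1.val = j2.val := by
      simp only [fB, fF, jof] at h; split_ifs at h <;> omega
    simp only [Prod.mk.injEq, Sum.inl.injEq, Fin.ext_iff]; exact this
  · exfalso
    by_cases e2 : p2.val % 2 = 0 <;>
      simp only [fB, e2, if_true, if_false, reduceIte, fF, fG, jof] at h <;>
      split_ifs at h <;> omega
  · exfalso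
    by_cases e1 : p1.val % 2 = 0 <;>
      simp only [fB, e1, if_true, if_false, reduceIte, fF, fG, jof] at h <;>
      split_ifs at h <;> omega
  · have : p1.val = p2.val ∧ i1.val = i2.val ∧ j1.val = j2.val := by
      by_cases e1 : p1.val % 2 = 0 <;> by_cases e2 : p2.val % 2 = 0 <;>
        simp only [fB, e1, e2, if_true, if_false, reduceIte, fF, fG, jof] at h <;>
        split_ifs at h <;> omega
    simp only [Prod.mk.injEq, Sum.inr.injEq, Fin.ext_iff]; exact this

lemma val_mem (l : ℕ) (b : ℤ) (hb : 10*(l:ℤ) ≤ b) {n : ℕ} (hn : n < 12*l) :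
    val l b n ∈ iSet 1 (b - 6*(l:ℤ) + 1) (b + 2*(l:ℤ)) ∪ iSet 2 (2*b - 8*(l:ℤ) + 2) (2*b) := by
  simp only [iSet, Set.mem_union, Set.mem_setOf_eq, val]
  split_ifs with h
  · right; refine ⟨by omega, by omega, by omega⟩
  · left; refine ⟨by omega, by omega, by omega⟩

lemma val_surj (l : ℕ) (b : ℤ) (hb : 10*(l:ℤ) ≤ b) {x : ℤ}
    (hx : x ∈ iSet 1 (b - 6*(l:ℤ) + 1) (b + 2*(l:ℤ)) ∪ iSet 2 (2*b - 8*(l:ℤ) + 2) (2*b)) :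
    ∃ n : ℕ, n < 12*l ∧ val l b n = x := by
  simp only [iSet, Set.mem_union, Set.mem_setOf_eq] at hx
  rcases hx with ⟨h1, h2, h3⟩ | ⟨h1, h2, h3⟩
  · exact ⟨4*l + (x - (b - 6*(l:ℤ) + 1)).toNat, by omega, by simp only [val]; split_ifs <;> omega⟩
  · exact ⟨(x - (2*b - 8*(l:ℤ) + 2)).toNat / 2, by omega, by simp only [val]; split_ifs <;> omega⟩


lemma fB_leaf (l u : ℕ) (hul : u ≤ l) (k e d c : ℕ)
    (hk : k < l) (he : e < 2) (hd : d < 2) (hc : c < 3) :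
    ∃ q, fB l u q = 4*l*c + 4*k + 2*e + d := by
  rcases Nat.lt_or_ge k (l-u) with hkl | hkl
  · refine ⟨(Sum.inl ⟨2*k + d, by omega⟩, ⟨1-e, by omega⟩, ⟨c, by omega⟩), ?_⟩
    interval_cases c <;> (simp [fB, fF, jof]; (try split_ifs) <;> omega)
  · rcases Nat.lt_or_ge d 1 with hd0 | hd0
    · -- d = 0
      rcases Nat.lt_or_ge c 1 with hc0 | hc0
      · -- c = 0 : even class, a = 0 : F form, p even
        refine ⟨(Sum.inr ⟨2*(k - (l-u)), by omega⟩, ⟨1-e, by omega⟩, ⟨c, by omega⟩), ?_⟩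
        interval_cases c <;> (simp [fB, fF, fG, jof]; (try split_ifs) <;> omega)
      · -- interval class with δ = 0 : G form, p odd
        refine ⟨(Sum.inr ⟨2*(k - (l-u)) + 1, by omega⟩, ⟨e, by omega⟩, ⟨c, by omega⟩), ?_⟩
        interval_cases c <;> (simp [fB, fF, fG, jof]; (try split_ifs) <;> omega)
    · -- d = 1
      rcases Nat.lt_or_ge c 1 with hc0 | hc0
      · -- c = 0 : even class, a = 1 : G form, p odd
        refine ⟨(Sum.inr ⟨2*(k - (l-u)) + 1, by omega⟩, ⟨e, by omega⟩, ⟨c, by omega⟩), ?_⟩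
        interval_cases c <;> (simp [fB, fF, fG, jof]; (try split_ifs) <;> omega)
      · -- interval class with δ = 1 : F form, p even
        refine ⟨(Sum.inr ⟨2*(k - (l-u)), by omega⟩, ⟨1-e, by omega⟩, ⟨c, by omega⟩), ?_⟩
        interval_cases c <;> (simp [fB, fF, fG, jof]; (try split_ifs) <;> omega)

lemma fB_surj (l u : ℕ) (hul : u ≤ l) {n : ℕ} (hn : n < 12*l) :
    ∃ q, fB l u q = n := by
  rcases Nat.lt_or_ge n (4*l) with h0 | h0
  · obtain ⟨q, hq⟩ := fB_leaf l u hul (n/4) (n%4/2) (n%2) 0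
      (by omega) (by omega) (by omega) (by omega)
    exact ⟨q, by omega⟩
  rcases Nat.lt_or_ge n (8*l) with h1 | h1
  · obtain ⟨q, hq⟩ := fB_leaf l u hul ((n-4*l)/4) ((n-4*l)%4/2) ((n-4*l)%2) 1
      (by omega) (by omega) (by omega) (by omega)
    exact ⟨q, by omega⟩
  · obtain ⟨q, hq⟩ := fB_leaf l u hul ((n-8*l)/4) ((n-8*l)%4/2) ((n-8*l)%2) 2
      (by omega) (by omega) (by omega) (by omega)
    exact ⟨q, by omega⟩


lemma rowsum_F (s r t : ℤ) (i : Fin 2) :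
    ∑ j, matF s r t i j = (if i.val = 0 then r + t - s else s - r - t) := by
  fin_cases i <;> simp [matF, Fin.sum_univ_three] <;> ring

lemma rowsum_G (s r t : ℤ) (i : Fin 2) :
    ∑ j, matG s r t i j = (if i.val = 0 then s - r - t else r + t - s) := by
  fin_cases i <;> simp [matG, Fin.sum_univ_three] <;> ring

lemma colsum_F (s r t : ℤ) :
    (∑ i, matF s r t i 0 = -4) ∧ (∑ i, matF s r t i 1 = 2) ∧ (∑ i, matF s r t i 2 = 2) := by
  refine ⟨?_, ?_, ?_⟩ <;> simp [matF, Fin.sum_univ_two] <;> ring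

lemma colsum_G (s r t : ℤ) :
    (∑ i, matG s r t i 0 = -4) ∧ (∑ i, matG s r t i 1 = 2) ∧ (∑ i, matG s r t i 2 = 2) := by
  refine ⟨?_, ?_, ?_⟩ <;> simp [matG, Fin.sum_univ_two] <;> ring

end EBT

theorem exists_B_two
    (l u : ℕ) (hul : u ≤ l) (b : ℤ) (hb : 10 * (l : ℤ) ≤ b) :
    ∃ B : Fin (2 * (l - u)) ⊕ Fin (2 * u) → Matrix (Fin 2) (Fin 3) ℤ,
      (∀ p : Fin (2 * (l - u)), ∀ i, ∑ j, B (Sum.inl p) i j = 0) ∧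
      (∀ p : Fin (2 * u),
        ∑ j, B (Sum.inr p) 0 j = 2 ∧ ∑ j, B (Sum.inr p) 1 j = -2) ∧
      (∀ p, ∑ i, B p i 0 = -4 ∧ ∑ i, B p i 1 = 2 ∧ ∑ i, B p i 2 = 2) ∧
      Function.Injective
        (fun q : (Fin (2 * (l - u)) ⊕ Fin (2 * u)) × Fin 2 × Fin 3 => |B q.1 q.2.1 q.2.2|) ∧
      {x : ℤ | ∃ p i j, |B p i j| = x} =
        iSet 1 (b - 6 * (l : ℤ) + 1) (b + 2 * (l : ℤ)) ∪
        iSet 2 (2 * b - 8 * (l : ℤ) + 2) (2 * b) := by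
  have hb' : 10*(l:ℤ) ≤ b := hb
  refine ⟨EBT.Bd l u b, ?_, ?_, ?_, ?_, ?_⟩
  · -- inl row sums
    intro p i
    have := EBT.rowsum_F (EBT.sv l b (p.val/2) (p.val%2)) (EBT.rv l b (p.val/2) (p.val%2))
      (EBT.tv l b (p.val/2) (p.val%2)) i
    simp only [EBT.Bd]
    rw [this]
    simp only [EBT.sv, EBT.rv, EBT.tv]
    have hp := p.isLt
    split_ifs <;> push_cast <;> omega
  · -- inr row sums
    intro p
    have hp := p.isLt
    by_cases h2 : p.val % 2 = 0 <;>
      simp only [EBT.Bd, h2, if_true, if_false, reduceIte]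
    · constructor
      · rw [EBT.rowsum_F]; simp only [EBT.sv, EBT.rv, EBT.tv]; norm_num; push_cast; omega
      · rw [EBT.rowsum_F]; simp only [EBT.sv, EBT.rv, EBT.tv]; norm_num; push_cast; omega
    · constructor
      · rw [EBT.rowsum_G]; simp only [EBT.sv, EBT.rv, EBT.tv]; norm_num; push_cast; omega
      · rw [EBT.rowsum_G]; simp only [EBT.sv, EBT.rv, EBT.tv]; norm_num; push_cast; omega
  · -- column sums
    rintro (p | p)
    · exact EBT.colsum_F _ _ _
    · by_cases h2 : p.val % 2 = 0 <;> simp only [EBT.Bd, h2, if_true, if_false, reduceIte]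
      · exact EBT.colsum_F _ _ _
      · exact EBT.colsum_G _ _ _
  · -- injectivity
    intro q1 q2 h
    simp only at h
    rw [EBT.absB l u b hul hb', EBT.absB l u b hul hb'] at h
    exact EBT.fB_inj l u hul
      (EBT.val_inj l b hb' (EBT.fB_lt l u hul q1) (EBT.fB_lt l u hul q2) h)
  · -- set equality
    ext x
    simp only [Set.mem_setOf_eq]
    constructor
    · rintro ⟨p, i, j, rfl⟩
      have := EBT.absB l u b hul hb' (p, i, j)
      simp only at this
      rw [this]
      exact EBT.val_mem l b hb' (EBT.fB_lt l u hul (p, i, j))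
    · intro hx
      obtain ⟨n, hn, hval⟩ := EBT.val_surj l b hb' hx
      obtain ⟨q, hq⟩ := EBT.fB_surj l u hul hn
      refine ⟨q.1, q.2.1, q.2.2, ?_⟩
      have := EBT.absB l u b hul hb' q
      rw [this, hq, hval]
end

section
/- Given an integer u ≥ 0, there exists a family 𝔅 of 2 × 3 integer matrices that is the disjoint union of two subfamilies 𝔅ᴵ and 𝔅ᴵᴵ such that: |𝔅ᴵ| = 14u + 12 and |𝔅ᴵᴵ| = 2u; every matrix in 𝔅ᴵ has row sums (0, 0) and column sums (−2, 1, 1); every matrix in 𝔅ᴵᴵ has row sums (−1, 1) and column sums (−2, 1, 1); and the absolute values of all entries of 𝔅 are pairwise distinct with set exactly [24u+36, 32u+34]₂ ∪ [32u+37, 36u+47]₂ ∪ [40u+49, 44u+59]₂ ∪ [48u+61, 96u+83]₂ ∪ [96u+84, 128u+107] ∪ [152u+144, 158u+149] ∪ [162u+150, 164u+155] ∪ [168u+156, 192u+167]. -/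
/-- the `x`-parameter of the `m`-th matrix -/
def XX (u m : ℕ) : ℤ :=
  if m < 12*u+6 then 48*(u:ℤ)+63+4*m
  else if m < 13*u+9 then 4*(m:ℤ)-8*u+27
  else if m < 14*u+12 then 4*(m:ℤ)-20*u+3
  else 4*(m:ℤ)-32*u-10

/-- the `y`-parameter of the `m`-th matrix -/
def YY (u m : ℕ) : ℤ :=
  if m < 12*u+6 then 168*(u:ℤ)+157+2*m
  else if m < 13*u+9 then 2*(m:ℤ)+138*u+139
  else if m < 14*u+12 then 2*(m:ℤ)+130*u+127
  else 2*(m:ℤ)+124*u+121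

/-- absolute value of entry `(r, c)` of the `m`-th matrix -/
def gg (u m r c : ℕ) : ℤ :=
  if c = 0 then (if m < 14*u+12 then XX u m - 2*r else XX u m - 2 + 2*r)
  else if c = 1 then (if m < 14*u+12 then YY u m - r else YY u m - 1 + r)
  else (if m < 14*u+12 then YY u m - XX u m + r else YY u m - XX u m - r)

/-- the `m`-th matrix of the family -/
def MB (u m : ℕ) : Matrix (Fin 2) (Fin 3) ℤ :=
  if m < 14*u+12 then
    !![-XX u m, YY u m, XX u m - YY u m;
       XX u m - 2, 1 - YY u m, YY u m - XX u m + 1]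
  else
    !![XX u m - 2, 1 - YY u m, YY u m - XX u m;
       -XX u m, YY u m, XX u m - YY u m + 1]

lemma abs_helper (a b : ℤ) (h : a = b ∨ a = -b) (hb : 0 ≤ b) : |a| = b := by
  rcases h with h | h <;> subst h
  · exact abs_of_nonneg hb
  · rw [abs_neg]; exact abs_of_nonneg hb

lemma XX_bound (u m : ℕ) (hm : m < 16*u+12) : 3 ≤ XX u m ∧ XX u m + 2 ≤ YY u m := by
  unfold XX YY; split_ifs <;> constructor <;> omega

lemma MB_abs (u m : ℕ) (hm : m < 16*u+12) (i : Fin 2) (j : Fin 3) :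
    |MB u m i j| = gg u m i.val j.val := by
  obtain ⟨hb1, hb2⟩ := XX_bound u m hm
  unfold MB gg
  rcases Nat.lt_or_ge m (14*u+12) with h | h
  · simp only [if_pos h]
    fin_cases i <;> fin_cases j <;> norm_num <;>
      first | ((apply abs_helper) <;> omega) | omega
  · simp only [if_neg (Nat.not_lt.mpr h)]
    fin_cases i <;> fin_cases j <;> norm_num <;>
      first | ((apply abs_helper) <;> omega) | omega

lemma MB_rowI (u m : ℕ) (hm : m < 14*u+12) (i : Fin 2) :
    ∑ j, MB u m i j = 0 := by
  unfold MB
  rw [if_pos hm]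
  fin_cases i <;> simp [Fin.sum_univ_three] <;> ring

lemma MB_rowII (u m : ℕ) (hm : 14*u+12 ≤ m) :
    (∑ j, MB u m 0 j = -1) ∧ (∑ j, MB u m 1 j = 1) := by
  unfold MB
  rw [if_neg (Nat.not_lt.mpr hm)]
  constructor <;> simp [Fin.sum_univ_three] <;> ring

lemma MB_col (u m : ℕ) :
    (∑ i, MB u m i 0 = -2) ∧ (∑ i, MB u m i 1 = 1) ∧ (∑ i, MB u m i 2 = 1) := by
  unfold MB
  split_ifs <;> refine ⟨?_, ?_, ?_⟩ <;> simp [Fin.sum_univ_two] <;> ring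

set_option maxHeartbeats 4000000 in
lemma gg_inj (u m1 m2 r1 r2 c1 c2 : ℕ) (hm1 : m1 < 16*u+12) (hm2 : m2 < 16*u+12)
    (hr1 : r1 < 2) (hr2 : r2 < 2) (hc1 : c1 < 3) (hc2 : c2 < 3)
    (h : gg u m1 r1 c1 = gg u m2 r2 c2) : m1 = m2 ∧ r1 = r2 ∧ c1 = c2 := by
  unfold gg XX YY at h
  split_ifs at h <;> omega

def PT (u : ℕ) (v : ℤ) : Prop :=
  (24*(u:ℤ)+36 ≤ v ∧ v ≤ 32*(u:ℤ)+34 ∧ 2 ∣ (v - (24*(u:ℤ)+36))) ∨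
  (32*(u:ℤ)+37 ≤ v ∧ v ≤ 36*(u:ℤ)+47 ∧ 2 ∣ (v - (32*(u:ℤ)+37))) ∨
  (40*(u:ℤ)+49 ≤ v ∧ v ≤ 44*(u:ℤ)+59 ∧ 2 ∣ (v - (40*(u:ℤ)+49))) ∨
  (48*(u:ℤ)+61 ≤ v ∧ v ≤ 96*(u:ℤ)+83 ∧ 2 ∣ (v - (48*(u:ℤ)+61))) ∨
  (96*(u:ℤ)+84 ≤ v ∧ v ≤ 128*(u:ℤ)+107) ∨
  (152*(u:ℤ)+144 ≤ v ∧ v ≤ 158*(u:ℤ)+149) ∨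
  (162*(u:ℤ)+150 ≤ v ∧ v ≤ 164*(u:ℤ)+155) ∨
  (168*(u:ℤ)+156 ≤ v ∧ v ≤ 192*(u:ℤ)+167)

set_option maxHeartbeats 4000000 in
lemma gg_mem (u m r c : ℕ) (hm : m < 16*u+12) (hr : r < 2) (hc : c < 3) :
    PT u (gg u m r c) := by
  unfold PT gg XX YY
  split_ifs <;> omega

set_option maxHeartbeats 4000000 in
lemma gg_surj (u : ℕ) (v : ℤ) (hv : PT u v) :
    ∃ m r c, m < 16*u+12 ∧ r < 2 ∧ c < 3 ∧ gg u m r c = v := by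
  unfold PT at hv
  rcases hv with h | h | h | h | h | h | h | h
  · exact ⟨14*u+12 + (v - (24*(u:ℤ)+36)).toNat / 4, ((v - (24*(u:ℤ)+36)).toNat % 4)/2, 0,
      by omega, by omega, by omega, by unfold gg XX YY; split_ifs <;> first | exact ‹False›.elim | omega⟩
  · exact ⟨13*u+9 + (v - (32*(u:ℤ)+37)).toNat / 4, 1 - ((v - (32*(u:ℤ)+37)).toNat % 4)/2, 0,
      by omega, by omega, by omega, by unfold gg XX YY; split_ifs <;> first | exact ‹False›.elim | omega⟩
  · exact ⟨12*u+6 + (v - (40*(u:ℤ)+49)).toNat / 4, 1 - ((v - (40*(u:ℤ)+49)).toNat % 4)/2, 0,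
      by omega, by omega, by omega, by unfold gg XX YY; split_ifs <;> first | exact ‹False›.elim | omega⟩
  · exact ⟨(v - (48*(u:ℤ)+61)).toNat / 4, 1 - ((v - (48*(u:ℤ)+61)).toNat % 4)/2, 0,
      by omega, by omega, by omega, by unfold gg XX YY; split_ifs <;> first | exact ‹False›.elim | omega⟩
  · rcases le_or_gt v (120*(u:ℤ)+95) with h5 | h5
    · exact ⟨(120*(u:ℤ)+95 - v).toNat / 2, 1 - (120*(u:ℤ)+95 - v).toNat % 2, 2,
        by omega, by omega, by omega, by unfold gg XX YY; split_ifs <;> first | exact ‹False›.elim | omega⟩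
    · rcases le_or_gt v (122*(u:ℤ)+101) with h6 | h6
      · exact ⟨12*u+6 + (122*(u:ℤ)+101 - v).toNat / 2, 1 - (122*(u:ℤ)+101 - v).toNat % 2, 2,
          by omega, by omega, by omega, by unfold gg XX YY; split_ifs <;> first | exact ‹False›.elim | omega⟩
      · rcases le_or_gt v (124*(u:ℤ)+107) with h7 | h7
        · exact ⟨13*u+9 + (124*(u:ℤ)+107 - v).toNat / 2, 1 - (124*(u:ℤ)+107 - v).toNat % 2, 2,
            by omega, by omega, by omega, by unfold gg XX YY; split_ifs <;> first | exact ‹False›.elim | omega⟩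
        · exact ⟨14*u+12 + (128*(u:ℤ)+107 - v).toNat / 2, (128*(u:ℤ)+107 - v).toNat % 2, 2,
            by omega, by omega, by omega, by unfold gg XX YY; split_ifs <;> first | exact ‹False›.elim | omega⟩
  · rcases le_or_gt v (156*(u:ℤ)+143) with h5 | h5
    · exact ⟨14*u+12 + (v - (152*(u:ℤ)+144)).toNat / 2, (v - (152*(u:ℤ)+144)).toNat % 2, 1,
        by omega, by omega, by omega, by unfold gg XX YY; split_ifs <;> first | exact ‹False›.elim | omega⟩
    · exact ⟨13*u+9 + (v - (156*(u:ℤ)+144)).toNat / 2, 1 - (v - (156*(u:ℤ)+144)).toNat % 2, 1,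
        by omega, by omega, by omega, by unfold gg XX YY; split_ifs <;> first | exact ‹False›.elim | omega⟩
  · exact ⟨12*u+6 + (v - (162*(u:ℤ)+150)).toNat / 2, 1 - (v - (162*(u:ℤ)+150)).toNat % 2, 1,
      by omega, by omega, by omega, by unfold gg XX YY; split_ifs <;> first | exact ‹False›.elim | omega⟩
  · exact ⟨(v - (168*(u:ℤ)+156)).toNat / 2, 1 - (v - (168*(u:ℤ)+156)).toNat % 2, 1,
      by omega, by omega, by omega, by unfold gg XX YY; split_ifs <;> first | exact ‹False›.elim | omega⟩

set_option maxHeartbeats 4000000 in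
theorem exists_B_three
    (u : ℕ) :
    ∃ B : Fin (14 * u + 12) ⊕ Fin (2 * u) → Matrix (Fin 2) (Fin 3) ℤ,
      (∀ p : Fin (14 * u + 12), ∀ i, ∑ j, B (Sum.inl p) i j = 0) ∧
      (∀ p : Fin (2 * u),
        ∑ j, B (Sum.inr p) 0 j = -1 ∧ ∑ j, B (Sum.inr p) 1 j = 1) ∧
      (∀ p, ∑ i, B p i 0 = -2 ∧ ∑ i, B p i 1 = 1 ∧ ∑ i, B p i 2 = 1) ∧
      Function.Injective
        (fun q : (Fin (14 * u + 12) ⊕ Fin (2 * u)) × Fin 2 × Fin 3 => |B q.1 q.2.1 q.2.2|) ∧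
      {x : ℤ | ∃ p i j, |B p i j| = x} =
        iSet 2 (24 * (u : ℤ) + 36) (32 * (u : ℤ) + 34) ∪
        iSet 2 (32 * (u : ℤ) + 37) (36 * (u : ℤ) + 47) ∪
        iSet 2 (40 * (u : ℤ) + 49) (44 * (u : ℤ) + 59) ∪
        iSet 2 (48 * (u : ℤ) + 61) (96 * (u : ℤ) + 83) ∪
        iSet 1 (96 * (u : ℤ) + 84) (128 * (u : ℤ) + 107) ∪
        iSet 1 (152 * (u : ℤ) + 144) (158 * (u : ℤ) + 149) ∪
        iSet 1 (162 * (u : ℤ) + 150) (164 * (u : ℤ) + 155) ∪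
        iSet 1 (168 * (u : ℤ) + 156) (192 * (u : ℤ) + 167) := by
  refine ⟨fun q => Sum.elim (fun p : Fin (14*u+12) => MB u p.val)
      (fun p : Fin (2*u) => MB u (14*u+12 + p.val)) q, ?_, ?_, ?_, ?_, ?_⟩
  · intro p i
    exact MB_rowI u p.val p.isLt i
  · intro p
    exact MB_rowII u (14*u+12+p.val) (Nat.le_add_right _ _)
  · intro p
    rcases p with p | p
    · exact MB_col u p.val
    · exact MB_col u _
  · intro q1 q2 h
    obtain ⟨p1, i1, j1⟩ := q1
    obtain ⟨p2, i2, j2⟩ := q2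
    simp only [Sum.elim_inl, Sum.elim_inr] at h
    rcases p1 with p1 | p1 <;> rcases p2 with p2 | p2 <;>
      simp only [Sum.elim_inl, Sum.elim_inr] at h
    · have := p1.isLt; have := p2.isLt
      rw [MB_abs u p1.val (by omega) i1 j1, MB_abs u p2.val (by omega) i2 j2] at h
      obtain ⟨h1, h2, h3⟩ := gg_inj u _ _ _ _ _ _ (by omega) (by omega) i1.isLt i2.isLt
        (by omega) (by omega) h
      simp only [Prod.mk.injEq, Sum.inl.injEq]
      exact ⟨Fin.ext h1, Fin.ext h2, Fin.ext h3⟩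
    · have := p1.isLt; have := p2.isLt
      rw [MB_abs u p1.val (by omega) i1 j1, MB_abs u _ (by omega) i2 j2] at h
      obtain ⟨h1, h2, h3⟩ := gg_inj u _ _ _ _ _ _ (by omega) (by omega) i1.isLt i2.isLt
        (by omega) (by omega) h
      omega
    · have := p1.isLt; have := p2.isLt
      rw [MB_abs u _ (by omega) i1 j1, MB_abs u p2.val (by omega) i2 j2] at h
      obtain ⟨h1, h2, h3⟩ := gg_inj u _ _ _ _ _ _ (by omega) (by omega) i1.isLt i2.isLt
        (by omega) (by omega) h
      omega
    · have := p1.isLt; have := p2.isLt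
      rw [MB_abs u _ (by omega) i1 j1, MB_abs u _ (by omega) i2 j2] at h
      obtain ⟨h1, h2, h3⟩ := gg_inj u _ _ _ _ _ _ (by omega) (by omega) i1.isLt i2.isLt
        (by omega) (by omega) h
      simp only [Prod.mk.injEq, Sum.inr.injEq]
      exact ⟨Fin.ext (by omega), Fin.ext h2, Fin.ext h3⟩
  · ext v
    simp only [Set.mem_setOf_eq, Set.mem_union, iSet]
    constructor
    · rintro ⟨p, i, j, rfl⟩
      rcases p with p | p
      · have hp := p.isLt
        have hmem := gg_mem u p.val i.val j.val (by omega) i.isLt j.isLt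
        simp only [Sum.elim_inl]
        rw [MB_abs u p.val (by omega) i j]
        unfold PT at hmem
        omega
      · have hp := p.isLt
        have hmem := gg_mem u (14*u+12+p.val) i.val j.val (by omega) i.isLt j.isLt
        simp only [Sum.elim_inr]
        rw [MB_abs u (14*u+12+p.val) (by omega) i j]
        unfold PT at hmem
        omega
    · intro hv
      have hPT : PT u v := by unfold PT; omega
      obtain ⟨m, r, c, hm, hr, hc, hgg⟩ := gg_surj u v hPT
      by_cases hcase : m < 14*u+12
      · refine ⟨Sum.inl ⟨m, hcase⟩, ⟨r, hr⟩, ⟨c, hc⟩, ?_⟩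
        simp only [Sum.elim_inl]
        rw [MB_abs u m (by omega)]
        exact hgg
      · refine ⟨Sum.inr ⟨m - (14*u+12), by omega⟩, ⟨r, hr⟩, ⟨c, hc⟩, ?_⟩
        simp only [Sum.elim_inr]
        have hq : 14*u+12 + (m - (14*u+12)) = m := by omega
        rw [hq, MB_abs u m (by omega)]
        exact hgg
end

section
/- Let α, β be nonnegative integers and let 𝒢 be a set of positive integers with |𝒢| = 16α + 24β. Suppose 𝒢 can be partitioned into an even number of 4-sets of type 1 together with an even number of 4-sets of type 2. Then there exist α integer matrices C₁, …, C_α of size 4 × 4 and β integer matrices D₁, …, D_β of size 6 × 4 such that: (1) every row sum and every column sum of each C_h and each D_k equals 0; and (2) the absolute values of all entries of the C_h's and D_k's are pairwise distinct and their set is exactly 𝒢. -/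
/-- `fourSet d x` is the 4-set of type `d`: `{x, x + d, x + 2d, x + 3d}`. -/
def fourSet (d x : ℤ) : Finset ℤ := {x, x + d, x + 2 * d, x + 3 * d}

def B1 (t a b : ℤ) : Matrix (Fin 2) (Fin 4) ℤ :=
  !![a+t, -(a+3*t), -b, b+2*t; -a, a+2*t, b+t, -(b+3*t)]
def B2 (t a b : ℤ) : Matrix (Fin 2) (Fin 4) ℤ :=
  !![a, -b, b+t, -(a+t); -(a+2*t), b+2*t, -(b+3*t), a+3*t]
def blk (c t a b : ℤ) : Matrix (Fin 2) (Fin 4) ℤ :=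
  if c = t then B1 t a b else if c = -t then -(B1 t a b)
  else if c = -2*t then B2 t a b else -(B2 t a b)

lemma abs_mem_self_or_neg {S : Finset ℤ} (hp : ∀ x ∈ S, 0 < x) {y : ℤ}
    (h : y ∈ S ∨ -y ∈ S) : |y| ∈ S := by
  rcases h with h|h
  · rwa [abs_of_pos (hp _ h)]
  · rw [abs_of_neg (by have := hp _ h; omega)]; exact h

lemma B1_abs_mem (t a b : ℤ) (hp : ∀ x ∈ fourSet t a ∪ fourSet t b, 0 < x)
    (i : Fin 2) (j : Fin 4) : |B1 t a b i j| ∈ fourSet t a ∪ fourSet t b := by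
  have hA : ∀ x ∈ fourSet t a, 0 < x := fun x hx => hp x (by simp [hx])
  have hB : ∀ x ∈ fourSet t b, 0 < x := fun x hx => hp x (by simp [hx])
  fin_cases i <;> fin_cases j <;> simp [B1]
  · refine Or.inl (abs_mem_self_or_neg hA ?_); simp [fourSet] <;> omega
  · refine Or.inl (abs_mem_self_or_neg hA ?_); simp [fourSet] <;> omega
  · refine Or.inr (abs_mem_self_or_neg hB ?_); simp [fourSet] <;> omega
  · refine Or.inr (abs_mem_self_or_neg hB ?_); simp [fourSet] <;> omega
  · refine Or.inl (abs_mem_self_or_neg hA ?_); simp [fourSet] <;> omega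
  · refine Or.inl (abs_mem_self_or_neg hA ?_); simp [fourSet] <;> omega
  · refine Or.inr (abs_mem_self_or_neg hB ?_); simp [fourSet] <;> omega
  · refine Or.inr (abs_mem_self_or_neg hB ?_); simp [fourSet] <;> omega

lemma B2_abs_mem (t a b : ℤ) (hp : ∀ x ∈ fourSet t a ∪ fourSet t b, 0 < x)
    (i : Fin 2) (j : Fin 4) : |B2 t a b i j| ∈ fourSet t a ∪ fourSet t b := by
  have hA : ∀ x ∈ fourSet t a, 0 < x := fun x hx => hp x (by simp [hx])
  have hB : ∀ x ∈ fourSet t b, 0 < x := fun x hx => hp x (by simp [hx])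
  fin_cases i <;> fin_cases j <;> simp [B2]
  · refine Or.inl (abs_mem_self_or_neg hA ?_); simp [fourSet] <;> omega
  · refine Or.inr (abs_mem_self_or_neg hB ?_); simp [fourSet] <;> omega
  · refine Or.inr (abs_mem_self_or_neg hB ?_); simp [fourSet] <;> omega
  · refine Or.inl (abs_mem_self_or_neg hA ?_); simp [fourSet] <;> omega
  · refine Or.inl (abs_mem_self_or_neg hA ?_); simp [fourSet] <;> omega
  · refine Or.inr (abs_mem_self_or_neg hB ?_); simp [fourSet] <;> omega
  · refine Or.inr (abs_mem_self_or_neg hB ?_); simp [fourSet] <;> omega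
  · refine Or.inl (abs_mem_self_or_neg hA ?_); simp [fourSet] <;> omega

lemma blk_abs_mem (c t a b : ℤ) (hp : ∀ x ∈ fourSet t a ∪ fourSet t b, 0 < x)
    (i : Fin 2) (j : Fin 4) : |blk c t a b i j| ∈ fourSet t a ∪ fourSet t b := by
  unfold blk
  split_ifs <;>
    first
      | exact B1_abs_mem t a b hp i j
      | exact B2_abs_mem t a b hp i j
      | (rw [Matrix.neg_apply, abs_neg]; exact B1_abs_mem t a b hp i j)
      | (rw [Matrix.neg_apply, abs_neg]; exact B2_abs_mem t a b hp i j)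
lemma mem_fourSet_union (t a b : ℤ) :
    (a ∈ fourSet t a ∪ fourSet t b) ∧ (a+t ∈ fourSet t a ∪ fourSet t b) ∧
    (a+2*t ∈ fourSet t a ∪ fourSet t b) ∧ (a+3*t ∈ fourSet t a ∪ fourSet t b) ∧
    (b ∈ fourSet t a ∪ fourSet t b) ∧ (b+t ∈ fourSet t a ∪ fourSet t b) ∧
    (b+2*t ∈ fourSet t a ∪ fourSet t b) ∧ (b+3*t ∈ fourSet t a ∪ fourSet t b) := by
  simp [fourSet]

lemma B1_abs_surj (t a b : ℤ) (hp : ∀ x ∈ fourSet t a ∪ fourSet t b, 0 < x)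
    (x : ℤ) (hx : x ∈ fourSet t a ∪ fourSet t b) :
    ∃ (i : Fin 2) (j : Fin 4), |B1 t a b i j| = x := by
  obtain ⟨m1, m2, m3, m4, m5, m6, m7, m8⟩ := mem_fourSet_union t a b
  have habs : ∀ y ∈ fourSet t a ∪ fourSet t b, |y| = y := fun y hy => abs_of_pos (hp y hy)
  simp only [fourSet, Finset.mem_union, Finset.mem_insert, Finset.mem_singleton] at hx
  rcases hx with (h|h|h|h)|(h|h|h|h)
  · exact ⟨1, 0, by rw [show B1 t a b 1 0 = -a from rfl, abs_neg, habs _ m1]; exact h.symm⟩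
  · exact ⟨0, 0, by rw [show B1 t a b 0 0 = a+t from rfl, habs _ m2]; exact h.symm⟩
  · exact ⟨1, 1, by rw [show B1 t a b 1 1 = a+2*t from rfl, habs _ m3]; exact h.symm⟩
  · exact ⟨0, 1, by rw [show B1 t a b 0 1 = -(a+3*t) from rfl, abs_neg, habs _ m4]; exact h.symm⟩
  · exact ⟨0, 2, by rw [show B1 t a b 0 2 = -b from rfl, abs_neg, habs _ m5]; exact h.symm⟩
  · exact ⟨1, 2, by rw [show B1 t a b 1 2 = b+t from rfl, habs _ m6]; exact h.symm⟩
  · exact ⟨0, 3, by rw [show B1 t a b 0 3 = b+2*t from rfl, habs _ m7]; exact h.symm⟩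
  · exact ⟨1, 3, by rw [show B1 t a b 1 3 = -(b+3*t) from rfl, abs_neg, habs _ m8]; exact h.symm⟩

lemma B2_abs_surj (t a b : ℤ) (hp : ∀ x ∈ fourSet t a ∪ fourSet t b, 0 < x)
    (x : ℤ) (hx : x ∈ fourSet t a ∪ fourSet t b) :
    ∃ (i : Fin 2) (j : Fin 4), |B2 t a b i j| = x := by
  obtain ⟨m1, m2, m3, m4, m5, m6, m7, m8⟩ := mem_fourSet_union t a b
  have habs : ∀ y ∈ fourSet t a ∪ fourSet t b, |y| = y := fun y hy => abs_of_pos (hp y hy)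
  simp only [fourSet, Finset.mem_union, Finset.mem_insert, Finset.mem_singleton] at hx
  rcases hx with (h|h|h|h)|(h|h|h|h)
  · exact ⟨0, 0, by rw [show B2 t a b 0 0 = a from rfl, habs _ m1]; exact h.symm⟩
  · exact ⟨0, 3, by rw [show B2 t a b 0 3 = -(a+t) from rfl, abs_neg, habs _ m2]; exact h.symm⟩
  · exact ⟨1, 0, by rw [show B2 t a b 1 0 = -(a+2*t) from rfl, abs_neg, habs _ m3]; exact h.symm⟩
  · exact ⟨1, 3, by rw [show B2 t a b 1 3 = a+3*t from rfl, habs _ m4]; exact h.symm⟩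
  · exact ⟨0, 1, by rw [show B2 t a b 0 1 = -b from rfl, abs_neg, habs _ m5]; exact h.symm⟩
  · exact ⟨0, 2, by rw [show B2 t a b 0 2 = b+t from rfl, habs _ m6]; exact h.symm⟩
  · exact ⟨1, 1, by rw [show B2 t a b 1 1 = b+2*t from rfl, habs _ m7]; exact h.symm⟩
  · exact ⟨1, 2, by rw [show B2 t a b 1 2 = -(b+3*t) from rfl, abs_neg, habs _ m8]; exact h.symm⟩

lemma blk_abs_surj (c t a b : ℤ) (hp : ∀ x ∈ fourSet t a ∪ fourSet t b, 0 < x)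
    (x : ℤ) (hx : x ∈ fourSet t a ∪ fourSet t b) :
    ∃ (i : Fin 2) (j : Fin 4), |blk c t a b i j| = x := by
  unfold blk
  split_ifs
  · exact B1_abs_surj t a b hp x hx
  · obtain ⟨i, j, h⟩ := B1_abs_surj t a b hp x hx
    exact ⟨i, j, by rwa [Matrix.neg_apply, abs_neg]⟩
  · exact B2_abs_surj t a b hp x hx
  · obtain ⟨i, j, h⟩ := B2_abs_surj t a b hp x hx
    exact ⟨i, j, by rwa [Matrix.neg_apply, abs_neg]⟩

def sgn4 : Fin 4 → ℤ := ![1,-1,1,-1]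

lemma blk_row (c t a b : ℤ) (i : Fin 2) : ∑ j, blk c t a b i j = 0 := by
  unfold blk
  split_ifs <;> fin_cases i <;>
    simp [Fin.sum_univ_four, B1, B2] <;> ring

lemma blk_col (c t a b : ℤ) (hc : c = t ∨ c = -t ∨ c = 2*t ∨ c = -2*t) (j : Fin 4) :
    ∑ i, blk c t a b i j = c * sgn4 j := by
  unfold blk
  split_ifs with h1 h2 h3
  · subst h1; fin_cases j <;> simp [Fin.sum_univ_two, B1, sgn4] <;> ring
  · subst h2; fin_cases j <;> simp [Fin.sum_univ_two, B1, sgn4] <;> ring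
  · subst h3; fin_cases j <;> simp [Fin.sum_univ_two, B2, sgn4] <;> ring
  · have hc2 : c = 2*t := by rcases hc with h|h|h|h <;> first | exact h | (exfalso; omega)
    subst hc2
    fin_cases j <;> simp [Fin.sum_univ_two, B2, sgn4] <;> ring

lemma blk_col2 (c t a b : ℤ) (hc : c = t ∨ c = -t ∨ c = 2*t ∨ c = -2*t) (j : Fin 4) :
    blk c t a b 0 j + blk c t a b 1 j = c * sgn4 j := by
  rw [← Fin.sum_univ_two (f := fun i => blk c t a b i j)]
  exact blk_col c t a b hc j

def pT (g1 n : ℕ) : ℤ := if n < g1 then 1 else 2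
def pA (g1 : ℕ) (F G2 : ℕ → ℤ) (n : ℕ) : ℤ := if n < g1 then F (2*n) else G2 (2*(n - g1))
def pB (g1 : ℕ) (F G2 : ℕ → ℤ) (n : ℕ) : ℤ := if n < g1 then F (2*n+1) else G2 (2*(n - g1)+1)
def pS (g1 : ℕ) (F G2 : ℕ → ℤ) (n : ℕ) : Finset ℤ :=
  fourSet (pT g1 n) (pA g1 F G2 n) ∪ fourSet (pT g1 n) (pB g1 F G2 n)

lemma pT_valid_two (g1 n : ℕ) :
    (2:ℤ) = pT g1 n ∨ (2:ℤ) = -pT g1 n ∨ (2:ℤ) = 2*pT g1 n ∨ (2:ℤ) = -2*pT g1 n := by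
  unfold pT; split_ifs <;> omega

lemma pT_valid_negtwo (g1 n : ℕ) :
    (-2:ℤ) = pT g1 n ∨ (-2:ℤ) = -pT g1 n ∨ (-2:ℤ) = 2*pT g1 n ∨ (-2:ℤ) = -2*pT g1 n := by
  unfold pT; split_ifs <;> omega

lemma pT_valid_succ (g1 n : ℕ) :
    pT g1 (n+1) = pT g1 n ∨ pT g1 (n+1) = -pT g1 n ∨
    pT g1 (n+1) = 2*pT g1 n ∨ pT g1 (n+1) = -2*pT g1 n := by
  unfold pT; split_ifs <;> omega

lemma pT_valid_pred (g1 n m : ℕ) (hnm : n ≤ m) :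
    -2*pT g1 n = pT g1 m ∨ -2*pT g1 n = -pT g1 m ∨
    -2*pT g1 n = 2*pT g1 m ∨ -2*pT g1 n = -2*pT g1 m := by
  unfold pT; split_ifs <;> omega

def Cmat (g1 : ℕ) (F G2 : ℕ → ℤ) (h : ℕ) : Matrix (Fin 4) (Fin 4) ℤ :=
  Matrix.of fun i j =>
    ![ blk 2 (pT g1 (2*h)) (pA g1 F G2 (2*h)) (pB g1 F G2 (2*h)) 0 j,
       blk 2 (pT g1 (2*h)) (pA g1 F G2 (2*h)) (pB g1 F G2 (2*h)) 1 j,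
       blk (-2) (pT g1 (2*h+1)) (pA g1 F G2 (2*h+1)) (pB g1 F G2 (2*h+1)) 0 j,
       blk (-2) (pT g1 (2*h+1)) (pA g1 F G2 (2*h+1)) (pB g1 F G2 (2*h+1)) 1 j ] i

def Dmat (g1 A : ℕ) (F G2 : ℕ → ℤ) (k : ℕ) : Matrix (Fin 6) (Fin 4) ℤ :=
  Matrix.of fun i j =>
    ![ blk (pT g1 (2*A+3*k+1)) (pT g1 (2*A+3*k)) (pA g1 F G2 (2*A+3*k)) (pB g1 F G2 (2*A+3*k)) 0 j,
       blk (pT g1 (2*A+3*k+1)) (pT g1 (2*A+3*k)) (pA g1 F G2 (2*A+3*k)) (pB g1 F G2 (2*A+3*k)) 1 j,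
       blk (pT g1 (2*A+3*k+1)) (pT g1 (2*A+3*k+1)) (pA g1 F G2 (2*A+3*k+1)) (pB g1 F G2 (2*A+3*k+1)) 0 j,
       blk (pT g1 (2*A+3*k+1)) (pT g1 (2*A+3*k+1)) (pA g1 F G2 (2*A+3*k+1)) (pB g1 F G2 (2*A+3*k+1)) 1 j,
       blk (-2*pT g1 (2*A+3*k+1)) (pT g1 (2*A+3*k+2)) (pA g1 F G2 (2*A+3*k+2)) (pB g1 F G2 (2*A+3*k+2)) 0 j,
       blk (-2*pT g1 (2*A+3*k+1)) (pT g1 (2*A+3*k+2)) (pA g1 F G2 (2*A+3*k+2)) (pB g1 F G2 (2*A+3*k+2)) 1 j ] i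


lemma Cmat_apply (g1 : ℕ) (F G2 : ℕ → ℤ) (h : ℕ) (j : Fin 4) :
    (Cmat g1 F G2 h 0 j = blk 2 (pT g1 (2*h)) (pA g1 F G2 (2*h)) (pB g1 F G2 (2*h)) 0 j) ∧
    (Cmat g1 F G2 h 1 j = blk 2 (pT g1 (2*h)) (pA g1 F G2 (2*h)) (pB g1 F G2 (2*h)) 1 j) ∧
    (Cmat g1 F G2 h 2 j = blk (-2) (pT g1 (2*h+1)) (pA g1 F G2 (2*h+1)) (pB g1 F G2 (2*h+1)) 0 j) ∧
    (Cmat g1 F G2 h 3 j = blk (-2) (pT g1 (2*h+1)) (pA g1 F G2 (2*h+1)) (pB g1 F G2 (2*h+1)) 1 j) :=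
  ⟨rfl, rfl, rfl, rfl⟩

lemma Dmat_apply (g1 A : ℕ) (F G2 : ℕ → ℤ) (k : ℕ) (j : Fin 4) :
    (Dmat g1 A F G2 k 0 j = blk (pT g1 (2*A+3*k+1)) (pT g1 (2*A+3*k)) (pA g1 F G2 (2*A+3*k)) (pB g1 F G2 (2*A+3*k)) 0 j) ∧
    (Dmat g1 A F G2 k 1 j = blk (pT g1 (2*A+3*k+1)) (pT g1 (2*A+3*k)) (pA g1 F G2 (2*A+3*k)) (pB g1 F G2 (2*A+3*k)) 1 j) ∧
    (Dmat g1 A F G2 k 2 j = blk (pT g1 (2*A+3*k+1)) (pT g1 (2*A+3*k+1)) (pA g1 F G2 (2*A+3*k+1)) (pB g1 F G2 (2*A+3*k+1)) 0 j) ∧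
    (Dmat g1 A F G2 k 3 j = blk (pT g1 (2*A+3*k+1)) (pT g1 (2*A+3*k+1)) (pA g1 F G2 (2*A+3*k+1)) (pB g1 F G2 (2*A+3*k+1)) 1 j) ∧
    (Dmat g1 A F G2 k 4 j = blk (-2*pT g1 (2*A+3*k+1)) (pT g1 (2*A+3*k+2)) (pA g1 F G2 (2*A+3*k+2)) (pB g1 F G2 (2*A+3*k+2)) 0 j) ∧
    (Dmat g1 A F G2 k 5 j = blk (-2*pT g1 (2*A+3*k+1)) (pT g1 (2*A+3*k+2)) (pA g1 F G2 (2*A+3*k+2)) (pB g1 F G2 (2*A+3*k+2)) 1 j) :=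
  ⟨rfl, rfl, rfl, rfl, rfl, rfl⟩

lemma Cmat_row (g1 : ℕ) (F G2 : ℕ → ℤ) (h : ℕ) (i : Fin 4) :
    ∑ j, Cmat g1 F G2 h i j = 0 := by
  fin_cases i
  · calc ∑ j, Cmat g1 F G2 h 0 j = ∑ j, blk 2 (pT g1 (2*h)) (pA g1 F G2 (2*h)) (pB g1 F G2 (2*h)) 0 j :=
        Finset.sum_congr rfl (fun j _ => (Cmat_apply g1 F G2 h j).1)
      _ = 0 := blk_row _ _ _ _ _
  · calc ∑ j, Cmat g1 F G2 h 1 j = ∑ j, blk 2 (pT g1 (2*h)) (pA g1 F G2 (2*h)) (pB g1 F G2 (2*h)) 1 j :=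
        Finset.sum_congr rfl (fun j _ => (Cmat_apply g1 F G2 h j).2.1)
      _ = 0 := blk_row _ _ _ _ _
  · calc ∑ j, Cmat g1 F G2 h 2 j = ∑ j, blk (-2) (pT g1 (2*h+1)) (pA g1 F G2 (2*h+1)) (pB g1 F G2 (2*h+1)) 0 j :=
        Finset.sum_congr rfl (fun j _ => (Cmat_apply g1 F G2 h j).2.2.1)
      _ = 0 := blk_row _ _ _ _ _
  · calc ∑ j, Cmat g1 F G2 h 3 j = ∑ j, blk (-2) (pT g1 (2*h+1)) (pA g1 F G2 (2*h+1)) (pB g1 F G2 (2*h+1)) 1 j :=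
        Finset.sum_congr rfl (fun j _ => (Cmat_apply g1 F G2 h j).2.2.2)
      _ = 0 := blk_row _ _ _ _ _

lemma Dmat_row (g1 A : ℕ) (F G2 : ℕ → ℤ) (k : ℕ) (i : Fin 6) :
    ∑ j, Dmat g1 A F G2 k i j = 0 := by
  fin_cases i
  · calc ∑ j, Dmat g1 A F G2 k 0 j = ∑ j, blk (pT g1 (2*A+3*k+1)) (pT g1 (2*A+3*k)) (pA g1 F G2 (2*A+3*k)) (pB g1 F G2 (2*A+3*k)) 0 j :=
        Finset.sum_congr rfl (fun j _ => (Dmat_apply g1 A F G2 k j).1)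
      _ = 0 := blk_row _ _ _ _ _
  · calc ∑ j, Dmat g1 A F G2 k 1 j = ∑ j, blk (pT g1 (2*A+3*k+1)) (pT g1 (2*A+3*k)) (pA g1 F G2 (2*A+3*k)) (pB g1 F G2 (2*A+3*k)) 1 j :=
        Finset.sum_congr rfl (fun j _ => (Dmat_apply g1 A F G2 k j).2.1)
      _ = 0 := blk_row _ _ _ _ _
  · calc ∑ j, Dmat g1 A F G2 k 2 j = ∑ j, blk (pT g1 (2*A+3*k+1)) (pT g1 (2*A+3*k+1)) (pA g1 F G2 (2*A+3*k+1)) (pB g1 F G2 (2*A+3*k+1)) 0 j :=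
        Finset.sum_congr rfl (fun j _ => (Dmat_apply g1 A F G2 k j).2.2.1)
      _ = 0 := blk_row _ _ _ _ _
  · calc ∑ j, Dmat g1 A F G2 k 3 j = ∑ j, blk (pT g1 (2*A+3*k+1)) (pT g1 (2*A+3*k+1)) (pA g1 F G2 (2*A+3*k+1)) (pB g1 F G2 (2*A+3*k+1)) 1 j :=
        Finset.sum_congr rfl (fun j _ => (Dmat_apply g1 A F G2 k j).2.2.2.1)
      _ = 0 := blk_row _ _ _ _ _
  · calc ∑ j, Dmat g1 A F G2 k 4 j = ∑ j, blk (-2*pT g1 (2*A+3*k+1)) (pT g1 (2*A+3*k+2)) (pA g1 F G2 (2*A+3*k+2)) (pB g1 F G2 (2*A+3*k+2)) 0 j :=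
        Finset.sum_congr rfl (fun j _ => (Dmat_apply g1 A F G2 k j).2.2.2.2.1)
      _ = 0 := blk_row _ _ _ _ _
  · calc ∑ j, Dmat g1 A F G2 k 5 j = ∑ j, blk (-2*pT g1 (2*A+3*k+1)) (pT g1 (2*A+3*k+2)) (pA g1 F G2 (2*A+3*k+2)) (pB g1 F G2 (2*A+3*k+2)) 1 j :=
        Finset.sum_congr rfl (fun j _ => (Dmat_apply g1 A F G2 k j).2.2.2.2.2)
      _ = 0 := blk_row _ _ _ _ _

lemma Cmat_col (g1 : ℕ) (F G2 : ℕ → ℤ) (h : ℕ) (j : Fin 4) :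
    ∑ i, Cmat g1 F G2 h i j = 0 := by
  obtain ⟨e0, e1, e2, e3⟩ := Cmat_apply g1 F G2 h j
  rw [Fin.sum_univ_four, e0, e1, e2, e3,
    show ∀ x1 x2 x3 x4 : ℤ, x1+x2+x3+x4 = (x1+x2)+(x3+x4) from fun _ _ _ _ => by ring,
    blk_col2 _ _ _ _ (pT_valid_two g1 (2*h)) j,
    blk_col2 _ _ _ _ (pT_valid_negtwo g1 (2*h+1)) j]
  ring

lemma Dmat_col (g1 A : ℕ) (F G2 : ℕ → ℤ) (k : ℕ) (j : Fin 4) :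
    ∑ i, Dmat g1 A F G2 k i j = 0 := by
  obtain ⟨e0, e1, e2, e3, e4, e5⟩ := Dmat_apply g1 A F G2 k j
  rw [Fin.sum_univ_six, e0, e1, e2, e3, e4, e5,
    show ∀ x1 x2 x3 x4 x5 x6 : ℤ, x1+x2+x3+x4+x5+x6 = (x1+x2)+((x3+x4)+(x5+x6)) from
      fun _ _ _ _ _ _ => by ring,
    blk_col2 _ _ _ _ (pT_valid_succ g1 (2*A+3*k)) j,
    blk_col2 _ _ _ _ (Or.inl rfl) j,
    blk_col2 _ _ _ _ (pT_valid_pred g1 (2*A+3*k+1) (2*A+3*k+2) (by omega)) j]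
  ring

lemma Cmat_abs_mem (g1 : ℕ) (F G2 : ℕ → ℤ) (h : ℕ)
    (hp0 : ∀ x ∈ pS g1 F G2 (2*h), 0 < x) (hp1 : ∀ x ∈ pS g1 F G2 (2*h+1), 0 < x)
    (i : Fin 4) (j : Fin 4) :
    |Cmat g1 F G2 h i j| ∈ pS g1 F G2 (2*h) ∪ pS g1 F G2 (2*h+1) := by
  obtain ⟨e0, e1, e2, e3⟩ := Cmat_apply g1 F G2 h j
  fin_cases i
  · show |Cmat g1 F G2 h 0 j| ∈ _
    rw [e0]; exact Finset.mem_union_left _ (blk_abs_mem _ _ _ _ hp0 _ j)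
  · show |Cmat g1 F G2 h 1 j| ∈ _
    rw [e1]; exact Finset.mem_union_left _ (blk_abs_mem _ _ _ _ hp0 _ j)
  · show |Cmat g1 F G2 h 2 j| ∈ _
    rw [e2]; exact Finset.mem_union_right _ (blk_abs_mem _ _ _ _ hp1 _ j)
  · show |Cmat g1 F G2 h 3 j| ∈ _
    rw [e3]; exact Finset.mem_union_right _ (blk_abs_mem _ _ _ _ hp1 _ j)

lemma Dmat_abs_mem (g1 A : ℕ) (F G2 : ℕ → ℤ) (k : ℕ)
    (hp0 : ∀ x ∈ pS g1 F G2 (2*A+3*k), 0 < x) (hp1 : ∀ x ∈ pS g1 F G2 (2*A+3*k+1), 0 < x)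
    (hp2 : ∀ x ∈ pS g1 F G2 (2*A+3*k+2), 0 < x)
    (i : Fin 6) (j : Fin 4) :
    |Dmat g1 A F G2 k i j| ∈ (pS g1 F G2 (2*A+3*k) ∪ pS g1 F G2 (2*A+3*k+1)) ∪ pS g1 F G2 (2*A+3*k+2) := by
  obtain ⟨e0, e1, e2, e3, e4, e5⟩ := Dmat_apply g1 A F G2 k j
  fin_cases i
  · show |Dmat g1 A F G2 k 0 j| ∈ _
    rw [e0]; exact Finset.mem_union_left _ (Finset.mem_union_left _ (blk_abs_mem _ _ _ _ hp0 _ j))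
  · show |Dmat g1 A F G2 k 1 j| ∈ _
    rw [e1]; exact Finset.mem_union_left _ (Finset.mem_union_left _ (blk_abs_mem _ _ _ _ hp0 _ j))
  · show |Dmat g1 A F G2 k 2 j| ∈ _
    rw [e2]; exact Finset.mem_union_left _ (Finset.mem_union_right _ (blk_abs_mem _ _ _ _ hp1 _ j))
  · show |Dmat g1 A F G2 k 3 j| ∈ _
    rw [e3]; exact Finset.mem_union_left _ (Finset.mem_union_right _ (blk_abs_mem _ _ _ _ hp1 _ j))
  · show |Dmat g1 A F G2 k 4 j| ∈ _
    rw [e4]; exact Finset.mem_union_right _ (blk_abs_mem _ _ _ _ hp2 _ j)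
  · show |Dmat g1 A F G2 k 5 j| ∈ _
    rw [e5]; exact Finset.mem_union_right _ (blk_abs_mem _ _ _ _ hp2 _ j)

lemma Cmat_abs_surj (g1 : ℕ) (F G2 : ℕ → ℤ) (h : ℕ)
    (hp0 : ∀ x ∈ pS g1 F G2 (2*h), 0 < x) (hp1 : ∀ x ∈ pS g1 F G2 (2*h+1), 0 < x)
    (x : ℤ) (hx : x ∈ pS g1 F G2 (2*h) ∪ pS g1 F G2 (2*h+1)) :
    ∃ (i : Fin 4) (j : Fin 4), |Cmat g1 F G2 h i j| = x := by
  rcases Finset.mem_union.mp hx with hx' | hx'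
  · obtain ⟨i', j, hb⟩ := blk_abs_surj 2 _ _ _ hp0 x hx'
    fin_cases i'
    · exact ⟨0, j, by rw [(Cmat_apply g1 F G2 h j).1]; exact hb⟩
    · exact ⟨1, j, by rw [(Cmat_apply g1 F G2 h j).2.1]; exact hb⟩
  · obtain ⟨i', j, hb⟩ := blk_abs_surj (-2) _ _ _ hp1 x hx'
    fin_cases i'
    · exact ⟨2, j, by rw [(Cmat_apply g1 F G2 h j).2.2.1]; exact hb⟩
    · exact ⟨3, j, by rw [(Cmat_apply g1 F G2 h j).2.2.2]; exact hb⟩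

lemma Dmat_abs_surj (g1 A : ℕ) (F G2 : ℕ → ℤ) (k : ℕ)
    (hp0 : ∀ x ∈ pS g1 F G2 (2*A+3*k), 0 < x) (hp1 : ∀ x ∈ pS g1 F G2 (2*A+3*k+1), 0 < x)
    (hp2 : ∀ x ∈ pS g1 F G2 (2*A+3*k+2), 0 < x)
    (x : ℤ) (hx : x ∈ (pS g1 F G2 (2*A+3*k) ∪ pS g1 F G2 (2*A+3*k+1)) ∪ pS g1 F G2 (2*A+3*k+2)) :
    ∃ (i : Fin 6) (j : Fin 4), |Dmat g1 A F G2 k i j| = x := by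
  rcases Finset.mem_union.mp hx with hx' | hx'
  · rcases Finset.mem_union.mp hx' with hx'' | hx''
    · obtain ⟨i', j, hb⟩ := blk_abs_surj (pT g1 (2*A+3*k+1)) _ _ _ hp0 x hx''
      fin_cases i'
      · exact ⟨0, j, by rw [(Dmat_apply g1 A F G2 k j).1]; exact hb⟩
      · exact ⟨1, j, by rw [(Dmat_apply g1 A F G2 k j).2.1]; exact hb⟩
    · obtain ⟨i', j, hb⟩ := blk_abs_surj (pT g1 (2*A+3*k+1)) _ _ _ hp1 x hx''
      fin_cases i'
      · exact ⟨2, j, by rw [(Dmat_apply g1 A F G2 k j).2.2.1]; exact hb⟩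
      · exact ⟨3, j, by rw [(Dmat_apply g1 A F G2 k j).2.2.2.1]; exact hb⟩
  · obtain ⟨i', j, hb⟩ := blk_abs_surj (-2*pT g1 (2*A+3*k+1)) _ _ _ hp2 x hx'
    fin_cases i'
    · exact ⟨4, j, by rw [(Dmat_apply g1 A F G2 k j).2.2.2.2.1]; exact hb⟩
    · exact ⟨5, j, by rw [(Dmat_apply g1 A F G2 k j).2.2.2.2.2]; exact hb⟩

lemma fourSet_card (d x : ℤ) (hd : d ≠ 0) : (fourSet d x).card = 4 := by
  rw [show fourSet d x = insert x (insert (x+d) (insert (x+2*d) ({x+3*d} : Finset ℤ))) from rfl,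
    Finset.card_insert_of_notMem (by simp; omega),
    Finset.card_insert_of_notMem (by simp; omega),
    Finset.card_insert_of_notMem (by simp; omega),
    Finset.card_singleton]


theorem exists_blocks
    (α β : ℕ) (G : Finset ℤ) (hpos : ∀ x ∈ G, 0 < x)
    (hcard : G.card = 16 * α + 24 * β)
    (hpart : ∃ (γ δ : ℕ) (f : Fin γ → ℤ) (g : Fin δ → ℤ),
      Even γ ∧ Even δ ∧
      (∀ p q : Fin γ ⊕ Fin δ, p ≠ q →
        Disjoint (Sum.elim (fun i => fourSet 1 (f i)) (fun i => fourSet 2 (g i)) p)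
                 (Sum.elim (fun i => fourSet 1 (f i)) (fun i => fourSet 2 (g i)) q)) ∧
      G = Finset.univ.biUnion
        (Sum.elim (fun i => fourSet 1 (f i)) (fun i => fourSet 2 (g i)))) :
    ∃ (C : Fin α → Matrix (Fin 4) (Fin 4) ℤ) (D : Fin β → Matrix (Fin 6) (Fin 4) ℤ),
      (∀ h i, ∑ j, C h i j = 0) ∧ (∀ h j, ∑ i, C h i j = 0) ∧
      (∀ k i, ∑ j, D k i j = 0) ∧ (∀ k j, ∑ i, D k i j = 0) ∧
      Function.Injective
        (fun q : (Fin α × Fin 4 × Fin 4) ⊕ (Fin β × Fin 6 × Fin 4) =>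
          Sum.elim (fun p => |C p.1 p.2.1 p.2.2|) (fun p => |D p.1 p.2.1 p.2.2|) q) ∧
      {x : ℤ | (∃ h i j, |C h i j| = x) ∨ (∃ k i j, |D k i j| = x)} = (G : Set ℤ) := by
  classical
  obtain ⟨γ, δ, f, g, hγe, hδe, hdisj, hGeq⟩ := hpart
  obtain ⟨g1, hg1⟩ := hγe
  obtain ⟨g2, hg2⟩ := hδe
  set F : ℕ → ℤ := fun n => if hn : n < γ then f ⟨n, hn⟩ else 0 with hF
  set G2 : ℕ → ℤ := fun n => if hn : n < δ then g ⟨n, hn⟩ else 0 with hG2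
  -- cardinality
  have hsum : G.card = 4 * (γ + δ) := by
    rw [hGeq, Finset.card_biUnion (fun x _ y _ hxy => hdisj x y hxy)]
    have h4 : ∀ p : Fin γ ⊕ Fin δ,
        (Sum.elim (fun i => fourSet 1 (f i)) (fun i => fourSet 2 (g i)) p).card = 4 := by
      rintro (i|i)
      · exact fourSet_card 1 (f i) one_ne_zero
      · exact fourSet_card 2 (g i) two_ne_zero
    rw [Finset.sum_congr rfl fun p _ => h4 p, Finset.sum_const, Finset.card_univ]
    simp [Fintype.card_sum]
    ring
  have htot : g1 + g2 = 2*α + 3*β := by omega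
  -- fourSets inside G
  have hsubF : ∀ i : Fin γ, fourSet 1 (f i) ⊆ G := by
    intro i; rw [hGeq]
    exact Finset.subset_biUnion_of_mem (Sum.elim (fun i => fourSet 1 (f i)) fun i => fourSet 2 (g i)) (Finset.mem_univ (Sum.inl i))
  have hsubG : ∀ i : Fin δ, fourSet 2 (g i) ⊆ G := by
    intro i; rw [hGeq]
    exact Finset.subset_biUnion_of_mem (Sum.elim (fun i => fourSet 1 (f i)) fun i => fourSet 2 (g i)) (Finset.mem_univ (Sum.inr i))
  have hpS_sub : ∀ n, n < g1 + g2 → pS g1 F G2 n ⊆ G := by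
    intro n hn
    by_cases h : n < g1
    · have h1 : 2*n < γ := by omega
      have h2 : 2*n+1 < γ := by omega
      have e : pS g1 F G2 n = fourSet 1 (f ⟨2*n, h1⟩) ∪ fourSet 1 (f ⟨2*n+1, h2⟩) := by
        unfold pS pT pA pB
        rw [if_pos h, if_pos h, if_pos h]
        simp only [hF]
        rw [dif_pos h1, dif_pos h2]
      rw [e]; exact Finset.union_subset (hsubF _) (hsubF _)
    · have h1 : 2*(n - g1) < δ := by omega
      have h2 : 2*(n - g1)+1 < δ := by omega
      have e : pS g1 F G2 n = fourSet 2 (g ⟨2*(n-g1), h1⟩) ∪ fourSet 2 (g ⟨2*(n-g1)+1, h2⟩) := by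
        unfold pS pT pA pB
        rw [if_neg h, if_neg h, if_neg h]
        simp only [hG2]
        rw [dif_pos h1, dif_pos h2]
      rw [e]; exact Finset.union_subset (hsubG _) (hsubG _)
  have hpSpos : ∀ n, n < g1 + g2 → ∀ x ∈ pS g1 F G2 n, 0 < x :=
    fun n hn x hx => hpos x (hpS_sub n hn hx)
  -- cover
  have hcover : ∀ x ∈ G, ∃ n, n < g1 + g2 ∧ x ∈ pS g1 F G2 n := by
    intro x hx
    rw [hGeq] at hx
    obtain ⟨p, -, hp⟩ := Finset.mem_biUnion.mp hx
    rcases p with i | i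
    · have hi := i.isLt
      refine ⟨(i:ℕ)/2, by omega, ?_⟩
      have hlt : (i:ℕ)/2 < g1 := by omega
      have hb1 : 2*((i:ℕ)/2) < γ := by omega
      have hb2 : 2*((i:ℕ)/2)+1 < γ := by omega
      have e : pS g1 F G2 ((i:ℕ)/2)
          = fourSet 1 (f ⟨2*((i:ℕ)/2), hb1⟩) ∪ fourSet 1 (f ⟨2*((i:ℕ)/2)+1, hb2⟩) := by
        unfold pS pT pA pB
        rw [if_pos hlt, if_pos hlt, if_pos hlt]
        simp only [hF]
        rw [dif_pos hb1, dif_pos hb2]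
      rw [e]
      have hp' : x ∈ fourSet 1 (f i) := hp
      rcases Nat.even_or_odd (i:ℕ) with ⟨m, hm⟩ | ⟨m, hm⟩
      · apply Finset.mem_union_left
        have hfi : (⟨2*((i:ℕ)/2), hb1⟩ : Fin γ) = i := by
          apply Fin.ext; simp only []; omega
        rw [hfi]; exact hp'
      · apply Finset.mem_union_right
        have hfi : (⟨2*((i:ℕ)/2)+1, hb2⟩ : Fin γ) = i := by
          apply Fin.ext; simp only []; omega
        rw [hfi]; exact hp'
    · have hi := i.isLt
      refine ⟨g1 + (i:ℕ)/2, by omega, ?_⟩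
      have hge : ¬ (g1 + (i:ℕ)/2 < g1) := by omega
      have hred : g1 + (i:ℕ)/2 - g1 = (i:ℕ)/2 := by omega
      have hb1 : 2*((i:ℕ)/2) < δ := by omega
      have hb2 : 2*((i:ℕ)/2)+1 < δ := by omega
      have e : pS g1 F G2 (g1 + (i:ℕ)/2)
          = fourSet 2 (g ⟨2*((i:ℕ)/2), hb1⟩) ∪ fourSet 2 (g ⟨2*((i:ℕ)/2)+1, hb2⟩) := by
        unfold pS pT pA pB
        rw [if_neg hge, if_neg hge, if_neg hge, hred]
        simp only [hG2]
        rw [dif_pos hb1, dif_pos hb2]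
      rw [e]
      have hp' : x ∈ fourSet 2 (g i) := hp
      rcases Nat.even_or_odd (i:ℕ) with ⟨m, hm⟩ | ⟨m, hm⟩
      · apply Finset.mem_union_left
        have hfi : (⟨2*((i:ℕ)/2), hb1⟩ : Fin δ) = i := by
          apply Fin.ext; simp only []; omega
        rw [hfi]; exact hp'
      · apply Finset.mem_union_right
        have hfi : (⟨2*((i:ℕ)/2)+1, hb2⟩ : Fin δ) = i := by
          apply Fin.ext; simp only []; omega
        rw [hfi]; exact hp'
  -- membership of all entries
  have hmemC : ∀ (h : Fin α) (i : Fin 4) (j : Fin 4), |Cmat g1 F G2 ↑h i j| ∈ G := by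
    intro h i j
    have hp0 : ∀ x ∈ pS g1 F G2 (2*(h:ℕ)), 0 < x := hpSpos _ (by omega)
    have hp1 : ∀ x ∈ pS g1 F G2 (2*(h:ℕ)+1), 0 < x := hpSpos _ (by have := h.isLt; omega)
    rcases Finset.mem_union.mp (Cmat_abs_mem g1 F G2 ↑h hp0 hp1 i j) with m | m
    · exact hpS_sub _ (by omega) m
    · exact hpS_sub _ (by have := h.isLt; omega) m
  have hmemD : ∀ (k : Fin β) (i : Fin 6) (j : Fin 4), |Dmat g1 α F G2 ↑k i j| ∈ G := by
    intro k i j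
    have hb := k.isLt
    have hp0 : ∀ x ∈ pS g1 F G2 (2*α+3*(k:ℕ)), 0 < x := hpSpos _ (by omega)
    have hp1 : ∀ x ∈ pS g1 F G2 (2*α+3*(k:ℕ)+1), 0 < x := hpSpos _ (by omega)
    have hp2 : ∀ x ∈ pS g1 F G2 (2*α+3*(k:ℕ)+2), 0 < x := hpSpos _ (by omega)
    rcases Finset.mem_union.mp (Dmat_abs_mem g1 α F G2 ↑k hp0 hp1 hp2 i j) with m | m
    · rcases Finset.mem_union.mp m with m' | m'
      · exact hpS_sub _ (by omega) m'
      · exact hpS_sub _ (by omega) m'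
    · exact hpS_sub _ (by omega) m
  -- surjectivity
  have hsurj : ∀ x ∈ G, (∃ (h : Fin α) (i : Fin 4) (j : Fin 4), |Cmat g1 F G2 ↑h i j| = x) ∨
      (∃ (k : Fin β) (i : Fin 6) (j : Fin 4), |Dmat g1 α F G2 ↑k i j| = x) := by
    intro x hx
    obtain ⟨n, hn, hmem⟩ := hcover x hx
    by_cases hc : n < 2*α
    · left
      have hh : n/2 < α := by omega
      have hp0 : ∀ x ∈ pS g1 F G2 (2*(n/2)), 0 < x := hpSpos _ (by omega)
      have hp1 : ∀ x ∈ pS g1 F G2 (2*(n/2)+1), 0 < x := hpSpos _ (by omega)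
      have hunion : x ∈ pS g1 F G2 (2*(n/2)) ∪ pS g1 F G2 (2*(n/2)+1) := by
        rcases Nat.even_or_odd n with ⟨m, hm⟩ | ⟨m, hm⟩
        · have : n = 2*(n/2) := by omega
          exact Finset.mem_union_left _ (this ▸ hmem)
        · have : n = 2*(n/2)+1 := by omega
          exact Finset.mem_union_right _ (this ▸ hmem)
      obtain ⟨i, j, hij⟩ := Cmat_abs_surj g1 F G2 (n/2) hp0 hp1 x hunion
      exact ⟨⟨n/2, hh⟩, i, j, hij⟩
    · right
      obtain ⟨k, hkβ, hcase⟩ : ∃ k, k < β ∧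
          (n = 2*α+3*k ∨ n = 2*α+3*k+1 ∨ n = 2*α+3*k+2) := ⟨(n-2*α)/3, by omega, by omega⟩
      have hp0 : ∀ x ∈ pS g1 F G2 (2*α+3*k), 0 < x := hpSpos _ (by omega)
      have hp1 : ∀ x ∈ pS g1 F G2 (2*α+3*k+1), 0 < x := hpSpos _ (by omega)
      have hp2 : ∀ x ∈ pS g1 F G2 (2*α+3*k+2), 0 < x := hpSpos _ (by omega)
      have hunion : x ∈ (pS g1 F G2 (2*α+3*k) ∪ pS g1 F G2 (2*α+3*k+1)) ∪ pS g1 F G2 (2*α+3*k+2) := by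
        rcases hcase with h | h | h
        · exact Finset.mem_union_left _ (Finset.mem_union_left _ (h ▸ hmem))
        · exact Finset.mem_union_left _ (Finset.mem_union_right _ (h ▸ hmem))
        · exact Finset.mem_union_right _ (h ▸ hmem)
      obtain ⟨i, j, hij⟩ := Dmat_abs_surj g1 α F G2 k hp0 hp1 hp2 x hunion
      exact ⟨⟨k, hkβ⟩, i, j, hij⟩
  -- conclusion
  refine ⟨fun h => Cmat g1 F G2 ↑h, fun k => Dmat g1 α F G2 ↑k,
    fun h i => Cmat_row g1 F G2 ↑h i,
    fun h j => Cmat_col g1 F G2 ↑h j,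
    fun k i => Dmat_row g1 α F G2 ↑k i,
    fun k j => Dmat_col g1 α F G2 ↑k j, ?_, ?_⟩
  · -- injectivity
    have hinj : Function.Injective (fun q : (Fin α × Fin 4 × Fin 4) ⊕ (Fin β × Fin 6 × Fin 4) =>
        Sum.elim (fun p => |Cmat g1 F G2 ↑p.1 p.2.1 p.2.2|)
          (fun p => |Dmat g1 α F G2 ↑p.1 p.2.1 p.2.2|) q) := by
      set Ψ : (Fin α × Fin 4 × Fin 4) ⊕ (Fin β × Fin 6 × Fin 4) → ℤ :=
        fun q => Sum.elim (fun p => |Cmat g1 F G2 ↑p.1 p.2.1 p.2.2|)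
          (fun p => |Dmat g1 α F G2 ↑p.1 p.2.1 p.2.2|) q with hΨ
      have himg : Finset.image Ψ Finset.univ = G := by
        apply Finset.Subset.antisymm
        · intro x hx
          obtain ⟨q, -, rfl⟩ := Finset.mem_image.mp hx
          rcases q with ⟨h, i, j⟩ | ⟨k, i, j⟩
          · exact hmemC h i j
          · exact hmemD k i j
        · intro x hx
          rcases hsurj x hx with ⟨h, i, j, hij⟩ | ⟨k, i, j, hij⟩
          · exact Finset.mem_image.mpr ⟨Sum.inl (h, i, j), Finset.mem_univ _, hij⟩
          · exact Finset.mem_image.mpr ⟨Sum.inr (k, i, j), Finset.mem_univ _, hij⟩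
      have hcards : (Finset.image Ψ Finset.univ).card =
          (Finset.univ : Finset ((Fin α × Fin 4 × Fin 4) ⊕ (Fin β × Fin 6 × Fin 4))).card := by
        rw [himg, hcard, Finset.card_univ]
        simp [Fintype.card_sum]
        ring
      have hio := Finset.injOn_of_card_image_eq hcards
      rw [Finset.coe_univ] at hio
      exact Set.injOn_univ.mp hio
    exact hinj
  · -- set equality
    ext x
    simp only [Set.mem_setOf_eq, Finset.mem_coe]
    constructor
    · rintro (⟨h, i, j, rfl⟩ | ⟨k, i, j, rfl⟩)
      · exact hmemC h i j
      · exact hmemD k i j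
    · intro hx
      rcases hsurj x hx with ⟨h, i, j, hij⟩ | ⟨k, i, j, hij⟩
      · exact Or.inl ⟨h, i, j, hij⟩
      · exact Or.inr ⟨k, i, j, hij⟩
end

section
/- Let b, ℓ, x be positive integers with b and ℓ odd and x > b + 2ℓ. Then there exists a family of (ℓ+1)/2 integer matrices of size 2 × 3 such that every matrix in the family has row sums (0, 0) and column sums (−2, 1, 1), and the absolute values of all entries of the family are pairwise distinct with set exactly [b, b+2ℓ]₂ ∪ [x, x+ℓ] ∪ [x+b+ℓ, x+b+2ℓ]. -/
set_option maxHeartbeats 2000000 in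
theorem exists_B_four
    (b l x : ℕ) (hb : 0 < b) (hl : 0 < l) (hx : 0 < x)
    (hbodd : Odd b) (hlodd : Odd l) (hxgt : b + 2 * l < x) :
    ∃ B : Fin ((l + 1) / 2) → Matrix (Fin 2) (Fin 3) ℤ,
      (∀ p i, ∑ j, B p i j = 0) ∧
      (∀ p, ∑ i, B p i 0 = -2 ∧ ∑ i, B p i 1 = 1 ∧ ∑ i, B p i 2 = 1) ∧
      Function.Injective
        (fun q : Fin ((l + 1) / 2) × Fin 2 × Fin 3 => |B q.1 q.2.1 q.2.2|) ∧
      {y : ℤ | ∃ p i j, |B p i j| = y} =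
        iSet 2 (b : ℤ) ((b : ℤ) + 2 * (l : ℤ)) ∪
        iSet 1 (x : ℤ) ((x : ℤ) + (l : ℤ)) ∪
        iSet 1 ((x : ℤ) + (b : ℤ) + (l : ℤ)) ((x : ℤ) + (b : ℤ) + 2 * (l : ℤ)) := by
  obtain ⟨k, hk⟩ := hlodd
  subst hk
  set M : Fin ((2 * k + 1 + 1) / 2) → Matrix (Fin 2) (Fin 3) ℤ := fun p =>
    !![(b:ℤ) + 4*(p:ℕ), (x:ℤ) + 2*k + 1 - 2*(p:ℕ), -((x:ℤ) + b + 2*k + 1 + 2*(p:ℕ));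
       -((b:ℤ) + 4*(p:ℕ) + 2), -((x:ℤ) + 2*k - 2*(p:ℕ)), (x:ℤ) + b + 2*k + 2 + 2*(p:ℕ)] with hM
  have hple : ∀ p : Fin ((2 * k + 1 + 1) / 2), (p : ℕ) ≤ k := by
    intro p; have := p.isLt; omega
  have habs : ∀ (p : Fin ((2 * k + 1 + 1) / 2)) (i : Fin 2) (j : Fin 3),
      |M p i j| = !![(b:ℤ) + 4*(p:ℕ), (x:ℤ) + 2*k + 1 - 2*(p:ℕ), (x:ℤ) + b + 2*k + 1 + 2*(p:ℕ);
       (b:ℤ) + 4*(p:ℕ) + 2, (x:ℤ) + 2*k - 2*(p:ℕ), (x:ℤ) + b + 2*k + 2 + 2*(p:ℕ)] i j := by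
    intro p i j
    have hp := hple p
    have c1 : (0:ℤ) ≤ (b:ℤ) + 4*(p:ℕ) := by push_cast; omega
    have c2 : (0:ℤ) ≤ (x:ℤ) + 2*k + 1 - 2*(p:ℕ) := by push_cast; omega
    have c3 : (0:ℤ) ≤ (x:ℤ) + b + 2*k + 1 + 2*(p:ℕ) := by push_cast; omega
    have c4 : (0:ℤ) ≤ (b:ℤ) + 4*(p:ℕ) + 2 := by push_cast; omega
    have c5 : (0:ℤ) ≤ (x:ℤ) + 2*k - 2*(p:ℕ) := by push_cast; omega
    have c6 : (0:ℤ) ≤ (x:ℤ) + b + 2*k + 2 + 2*(p:ℕ) := by push_cast; omega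
    fin_cases i <;> fin_cases j <;> simp only [hM] <;> norm_num <;>
      first | omega | (rw [abs_of_nonpos (by omega)]; omega)
  refine ⟨M, ?_, ?_, ?_, ?_⟩
  · intro p i
    fin_cases i <;> simp [hM, Fin.sum_univ_three] <;> ring
  · intro p
    refine ⟨?_, ?_, ?_⟩ <;> simp [hM, Fin.sum_univ_two] <;> ring
  · rintro ⟨p, i, j⟩ ⟨p', i', j'⟩ h
    simp only [habs] at h
    have hp := hple p
    have hp' := hple p'
    clear_value M
    clear hM habs hple M
    fin_cases i <;> fin_cases j <;> fin_cases i' <;> fin_cases j' <;>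
      norm_num at h ⊢ <;>
      first
        | omega
        | (exact Fin.ext (by omega))
        | (exact ⟨Fin.ext (by omega), rfl, rfl⟩)
        | (refine ⟨Fin.ext (by omega), ?_, ?_⟩ <;> rfl)
  · ext y
    simp only [Set.mem_setOf_eq, Set.mem_union, iSet, habs]
    clear_value M
    clear hM habs M
    constructor
    · rintro ⟨p, i, j, rfl⟩
      have hp := hple p
      fin_cases i <;> fin_cases j <;> norm_num <;> push_cast <;> omega
    · rintro ((⟨h1, h2, h3⟩ | ⟨h1, h2, h3⟩) | ⟨h1, h2, h3⟩)
      · obtain ⟨j, hj⟩ := h3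
        rcases Int.even_or_odd j with ⟨c, hc⟩ | ⟨c, hc⟩
        · refine ⟨⟨c.toNat, by omega⟩, 0, 0, ?_⟩
          norm_num; omega
        · refine ⟨⟨c.toNat, by omega⟩, 1, 0, ?_⟩
          norm_num; omega
      · rcases Int.even_or_odd (y - x) with ⟨c, hc⟩ | ⟨c, hc⟩
        · refine ⟨⟨(k - c).toNat, by omega⟩, 1, 1, ?_⟩
          norm_num; omega
        · refine ⟨⟨(k - c).toNat, by omega⟩, 0, 1, ?_⟩
          norm_num; omega
      · rcases Int.even_or_odd (y - x - b) with ⟨c, hc⟩ | ⟨c, hc⟩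
        · refine ⟨⟨(c - k - 1).toNat, by omega⟩, 1, 2, ?_⟩
          norm_num [Matrix.cons_val_two, Matrix.tail_cons, Matrix.head_cons]; omega
        · refine ⟨⟨(c - k).toNat, by omega⟩, 0, 2, ?_⟩
          norm_num [Matrix.cons_val_two, Matrix.tail_cons, Matrix.head_cons]; omega
end
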